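/- arXiv:2404.14035 — 7 statements merged into one kernel-verified Lean document; each statement's English description precedes it below -/
import Mathlib

section
/- For every natural number k ≥ 1, the identity ∑_{m=0}^{k-1} Γ(m+1,k)/m! = e^{-k} · k^k/(k-1)! holds, where Γ(m+1,k) = ∫_k^∞ t^m e^{-t} dt is the upper incomplete gamma function (so that Γ(m+1,k)/m! = e^{-k} ∑_{j=0}^m k^j/j!). -/
open MeasureTheory Real Set Filter

lemma upper_gamma_eq (m : ℕ) {x : ℝ} (hx : 0 ≤ x) :
    (∫ t in Set.Ioi x, t ^ m * Real.exp (-t)) =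
      Real.exp (-x) * ∑ j ∈ Finset.range (m + 1),
        ((m.factorial : ℝ) / j.factorial) * x ^ j := by
  set c : ℕ → ℝ := fun j => (m.factorial : ℝ) / j.factorial with hc
  set F : ℝ → ℝ := fun t => -(Real.exp (-t) * ∑ j ∈ Finset.range (m + 1), c j * t ^ j) with hF
  have key : ∀ t : ℝ, (∑ j ∈ Finset.range (m + 1), c j * ((j : ℝ) * t ^ (j - 1))) =
      ∑ j ∈ Finset.range m, c j * t ^ j := by
    intro t
    rw [Finset.sum_range_succ']
    simp only [Nat.cast_zero, zero_mul, mul_zero, add_zero]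
    refine Finset.sum_congr rfl fun j hj => ?_
    have hstep : c (j + 1) * ((j + 1 : ℕ) : ℝ) = c j := by
      simp only [hc, Nat.factorial_succ, Nat.cast_mul]
      have h1 : ((j + 1 : ℕ) : ℝ) ≠ 0 := by positivity
      have h2 : (j.factorial : ℝ) ≠ 0 := Nat.cast_ne_zero.mpr j.factorial_ne_zero
      field_simp
    rw [Nat.add_sub_cancel, ← hstep]
    push_cast
    ring
  have hderiv : ∀ t ∈ Set.Ici x, HasDerivAt F (t ^ m * Real.exp (-t)) t := by
    intro t _
    have hP : HasDerivAt (fun t : ℝ => ∑ j ∈ Finset.range (m + 1), c j * t ^ j)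
        (∑ j ∈ Finset.range (m + 1), c j * ((j : ℝ) * t ^ (j - 1))) t :=
      HasDerivAt.fun_sum fun j _ => (hasDerivAt_pow j t).const_mul (c j)
    have hE : HasDerivAt (fun t : ℝ => Real.exp (-t)) (-Real.exp (-t)) t := by
      simpa using (hasDerivAt_neg' t).exp
    have hprod := (hE.mul hP).neg
    refine hprod.congr_deriv ?_
    rw [key t]
    have hsplit : (∑ j ∈ Finset.range (m + 1), c j * t ^ j) =
        (∑ j ∈ Finset.range m, c j * t ^ j) + t ^ m := by
      rw [Finset.sum_range_succ]
      have : c m = 1 :=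
        div_self (Nat.cast_ne_zero.mpr m.factorial_ne_zero)
      rw [this, one_mul]
    rw [hsplit]
    ring
  have htend : Tendsto F atTop (nhds 0) := by
    have h1 : Tendsto (fun t : ℝ => Real.exp (-t) * ∑ j ∈ Finset.range (m + 1), c j * t ^ j)
        atTop (nhds 0) := by
      have heq : ∀ᶠ t in (atTop : Filter ℝ),
          Real.exp (-t) * ∑ j ∈ Finset.range (m + 1), c j * t ^ j
          = ∑ j ∈ Finset.range (m + 1), c j * (t ^ j * Real.exp (-t)) := by
        filter_upwards with t
        rw [Finset.mul_sum]
        exact Finset.sum_congr rfl fun j _ => by ring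
      rw [tendsto_congr' heq]
      have h2 := fun j => (Real.tendsto_pow_mul_exp_neg_atTop_nhds_zero j).const_mul (c j)
      simpa using tendsto_finset_sum (Finset.range (m + 1)) fun j _ => h2 j
    simpa [hF] using h1.neg
  have hpos : ∀ t ∈ Set.Ioi x, 0 ≤ t ^ m * Real.exp (-t) := fun t ht =>
    mul_nonneg (pow_nonneg (hx.trans ht.le) m) (Real.exp_pos _).le
  have hint : IntegrableOn (fun t => t ^ m * Real.exp (-t)) (Set.Ioi x) :=
    integrableOn_Ioi_deriv_of_nonneg ((hderiv x Set.self_mem_Ici).continuousAt.continuousWithinAt)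
      (fun t ht => hderiv t (Set.Ioi_subset_Ici_self ht)) hpos htend
  rw [integral_Ioi_of_hasDerivAt_of_tendsto' hderiv hint htend]
  simp only [hF, hc, Finset.mul_sum, sub_neg_eq_add, zero_add]

lemma double_sum_eq (f : ℕ → ℝ) (n : ℕ) :
    (∑ m ∈ Finset.range n, ∑ j ∈ Finset.range (m + 1), f j) =
      ∑ j ∈ Finset.range n, ((n : ℝ) - j) * f j := by
  induction n with
  | zero => simp
  | succ n ih =>
    rw [Finset.sum_range_succ, ih,
      Finset.sum_range_succ (fun j => (((n + 1 : ℕ) : ℝ) - j) * f j) n,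
      Finset.sum_range_succ f n]
    have h1 : ∑ j ∈ Finset.range n, (((n + 1 : ℕ) : ℝ) - j) * f j =
        ∑ j ∈ Finset.range n, (((n : ℝ) - j) * f j + f j) :=
      Finset.sum_congr rfl fun j _ => by push_cast; ring
    rw [h1, Finset.sum_add_distrib]
    push_cast
    ring

/-- For every natural number `k ≥ 1`,
`∑_{m=0}^{k-1} Γ(m+1,k)/m! = e^{-k} · k^k/(k-1)!`, where
`Γ(m+1,k) = ∫_k^∞ t^m e^{-t} dt` is the upper incomplete gamma function. -/
theorem sum_upper_incomplete_gamma (k : ℕ) (hk : 1 ≤ k) :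
    ∑ m ∈ Finset.range k,
        (∫ t in Set.Ioi (k : ℝ), t ^ m * Real.exp (-t)) / (Nat.factorial m) =
      Real.exp (-(k : ℝ)) * (k : ℝ) ^ k / (Nat.factorial (k - 1)) := by
  have hx : (0:ℝ) ≤ (k:ℝ) := by positivity
  have step1 : ∀ m : ℕ, (∫ t in Set.Ioi (k : ℝ), t ^ m * Real.exp (-t)) / (Nat.factorial m) =
      Real.exp (-(k:ℝ)) * ∑ j ∈ Finset.range (m + 1), (k:ℝ) ^ j / j.factorial := by
    intro m
    rw [upper_gamma_eq m hx, Finset.mul_sum, Finset.sum_div, Finset.mul_sum]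
    refine Finset.sum_congr rfl fun j _ => ?_
    have hm : (m.factorial : ℝ) ≠ 0 := Nat.cast_ne_zero.mpr m.factorial_ne_zero
    have hj : (j.factorial : ℝ) ≠ 0 := Nat.cast_ne_zero.mpr j.factorial_ne_zero
    field_simp
  simp_rw [step1, ← Finset.mul_sum, mul_div_assoc]
  congr 1
  rw [double_sum_eq]
  -- telescoping
  have g : ℕ → ℝ := fun j => (k:ℝ) ^ j * j / j.factorial
  have htel : ∀ j ∈ Finset.range k,
      ((k:ℝ) - j) * ((k:ℝ) ^ j / j.factorial) =
      ((k:ℝ) ^ (j+1) * ((j+1 : ℕ) : ℝ) / (j+1).factorial) - ((k:ℝ) ^ j * j / j.factorial) := by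
    intro j _
    have hj : (j.factorial : ℝ) ≠ 0 := Nat.cast_ne_zero.mpr j.factorial_ne_zero
    have hj1 : ((j+1).factorial : ℝ) = (j+1) * j.factorial := by
      rw [Nat.factorial_succ]; push_cast; ring
    rw [hj1]
    push_cast
    have hjp : ((j:ℝ) + 1) ≠ 0 := by positivity
    field_simp
    ring
  rw [Finset.sum_congr rfl htel,
    Finset.sum_range_sub (fun j => (k:ℝ) ^ j * j / j.factorial)]
  have hkf : (k.factorial : ℝ) = k * (k-1).factorial := by
    obtain ⟨n, rfl⟩ := Nat.exists_eq_add_of_le hk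
    simp [Nat.factorial_succ, Nat.add_comm 1 n]
  have h1 : ((k-1).factorial : ℝ) ≠ 0 := Nat.cast_ne_zero.mpr (k-1).factorial_ne_zero
  have h2 : (k:ℝ) ≠ 0 := by positivity
  simp only [pow_zero, Nat.cast_zero, mul_zero, zero_div, sub_zero, hkf]
  field_simp
end

section
/- As the natural number k tends to infinity, (1/k) ∑_{m=0}^{k-1} Γ(m+1,k)/m! tends to 0, where Γ is the upper incomplete gamma function. -/
open MeasureTheory Real Filter

lemma myIntOn (m : ℕ) (k : ℝ) (hk : 0 < k) :
    IntegrableOn (fun t : ℝ => t ^ m * Real.exp (-t)) (Set.Ioi k) := by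
  have h := Real.GammaIntegral_convergent (s := (m + 1 : ℝ)) (by positivity)
  have h2 : IntegrableOn (fun x : ℝ => Real.exp (-x) * x ^ ((m : ℝ) + 1 - 1)) (Set.Ioi k) :=
    h.mono_set (Set.Ioi_subset_Ioi hk.le)
  refine h2.congr_fun (fun x hx => ?_) measurableSet_Ioi
  dsimp only
  rw [add_sub_cancel_right, Real.rpow_natCast, mul_comm]

lemma myDeriv (m : ℕ) (t : ℝ) :
    HasDerivAt (fun t : ℝ => -(Real.exp (-t) *
        ∑ j ∈ Finset.range (m + 1), ((m.factorial : ℝ) / j.factorial) * t ^ j))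
      (t ^ m * Real.exp (-t)) t := by
  have he : HasDerivAt (fun t : ℝ => Real.exp (-t)) (-Real.exp (-t)) t := by
    simpa using (hasDerivAt_neg t).exp
  have hs : HasDerivAt
      (fun t : ℝ => ∑ j ∈ Finset.range (m + 1), ((m.factorial : ℝ) / j.factorial) * t ^ j)
      (∑ j ∈ Finset.range (m + 1), ((m.factorial : ℝ) / j.factorial) * (j * t ^ (j - 1))) t :=
    HasDerivAt.fun_sum fun j _ => (hasDerivAt_pow j t).const_mul _
  have h := (he.mul hs).neg
  refine h.congr_deriv ?_
  have key : ∑ j ∈ Finset.range (m + 1), ((m.factorial : ℝ) / j.factorial) * (j * t ^ (j - 1))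
      = ∑ j ∈ Finset.range m, ((m.factorial : ℝ) / j.factorial) * t ^ j := by
    rw [Finset.sum_range_succ']
    simp only [Nat.cast_zero, zero_mul, mul_zero, add_zero]
    refine Finset.sum_congr rfl fun j _ => ?_
    have hfac : ((j + 1).factorial : ℝ) = (j + 1) * j.factorial := by
      rw [Nat.factorial_succ]; push_cast; ring
    simp only [hfac, Nat.add_sub_cancel, Nat.cast_add, Nat.cast_one]
    have h1 : (j.factorial : ℝ) ≠ 0 := Nat.cast_ne_zero.mpr j.factorial_ne_zero
    have h2 : ((j : ℝ) + 1) ≠ 0 := by positivity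
    field_simp
  rw [key]
  have hsp : ∑ j ∈ Finset.range (m + 1), ((m.factorial : ℝ) / j.factorial) * t ^ j
      = ∑ j ∈ Finset.range m, ((m.factorial : ℝ) / j.factorial) * t ^ j + t ^ m := by
    rw [Finset.sum_range_succ, div_self (Nat.cast_ne_zero.mpr m.factorial_ne_zero), one_mul]
  rw [hsp]
  ring

lemma myGammaInt (m : ℕ) (k : ℝ) (hk : 0 < k) :
    ∫ t in Set.Ioi k, t ^ m * Real.exp (-t)
      = Real.exp (-k) * ∑ j ∈ Finset.range (m + 1), ((m.factorial : ℝ) / j.factorial) * k ^ j := by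
  have htend : Tendsto (fun t : ℝ => -(Real.exp (-t) *
      ∑ j ∈ Finset.range (m + 1), ((m.factorial : ℝ) / j.factorial) * t ^ j)) atTop (nhds 0) := by
    have : Tendsto (fun t : ℝ =>
        ∑ j ∈ Finset.range (m + 1), ((m.factorial : ℝ) / j.factorial) * (t ^ j * Real.exp (-t)))
        atTop (nhds (∑ j ∈ Finset.range (m + 1), ((m.factorial : ℝ) / j.factorial) * 0)) := by
      refine tendsto_finset_sum _ fun j _ => Tendsto.const_mul _ ?_
      exact tendsto_pow_mul_exp_neg_atTop_nhds_zero j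
    simp only [mul_zero, Finset.sum_const_zero] at this
    have := this.neg
    rw [neg_zero] at this
    refine this.congr fun t => ?_
    rw [Finset.mul_sum]
    congr 1
    refine Finset.sum_congr rfl fun j _ => by ring
  have := integral_Ioi_of_hasDerivAt_of_tendsto' (fun x _ => myDeriv m x) (myIntOn m k hk) htend
  rw [this]
  ring

lemma mySumSum (f : ℕ → ℝ) (n : ℕ) :
    ∑ m ∈ Finset.range n, ∑ j ∈ Finset.range (m + 1), f j
      = ∑ j ∈ Finset.range n, ((n : ℝ) - j) * f j := by
  induction n with
  | zero => simp
  | succ n ih =>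
    rw [Finset.sum_range_succ, ih, Finset.sum_range_succ]
    have : ∀ j ∈ Finset.range n, (((n : ℕ) + 1 : ℕ) - (j : ℝ)) * f j
        = ((n : ℝ) - j) * f j + f j := fun j _ => by push_cast; ring
    rw [Finset.sum_range_succ, Finset.sum_congr rfl this, Finset.sum_add_distrib]
    push_cast
    ring

lemma mySumEval (n : ℕ) :
    ∑ j ∈ Finset.range (n + 1), (((n : ℝ) + 1) - j) * (((n : ℝ) + 1) ^ j / j.factorial)
      = ((n : ℝ) + 1) ^ (n + 1) / n.factorial := by
  set x : ℝ := (n : ℝ) + 1 with hx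
  have hsub : ∀ j : ℕ, (x - j) * (x ^ j / j.factorial)
      = x * (x ^ j / j.factorial) - (j : ℝ) * (x ^ j / j.factorial) := fun j => by ring
  simp only [hsub, Finset.sum_sub_distrib]
  have h2 : ∑ j ∈ Finset.range (n + 1), (j : ℝ) * (x ^ j / j.factorial)
      = ∑ j ∈ Finset.range n, x * (x ^ j / j.factorial) := by
    rw [Finset.sum_range_succ']
    simp only [Nat.cast_zero, zero_mul, add_zero]
    refine Finset.sum_congr rfl fun j _ => ?_
    have hfac : ((j + 1).factorial : ℝ) = (j + 1) * j.factorial := by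
      rw [Nat.factorial_succ]; push_cast; ring
    have h1 : (j.factorial : ℝ) ≠ 0 := Nat.cast_ne_zero.mpr j.factorial_ne_zero
    have h2 : ((j : ℝ) + 1) ≠ 0 := by positivity
    push_cast [hfac]
    field_simp
    ring
  rw [h2, Finset.sum_range_succ]
  ring

/-- As `k → ∞` (natural), `(1/k) ∑_{m=0}^{k-1} Γ(m+1,k)/m! → 0`,
where `Γ(m+1,k) = ∫_k^∞ t^m e^{-t} dt` is the upper incomplete gamma function. -/
theorem tendsto_avg_upper_incomplete_gamma :
    Tendsto (fun k : ℕ =>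
        (1 / (k : ℝ)) * ∑ m ∈ Finset.range k,
          (∫ t in Set.Ioi (k : ℝ), t ^ m * Real.exp (-t)) / (Nat.factorial m))
      atTop (nhds 0) := by
  have hstir : Tendsto (fun k : ℕ => (Stirling.stirlingSeq k * Real.sqrt (2 * k))⁻¹)
      atTop (nhds 0) := by
    refine Tendsto.inv_tendsto_atTop ?_
    refine Tendsto.pos_mul_atTop (by positivity : (0 : ℝ) < Real.sqrt π)
      Stirling.tendsto_stirlingSeq_sqrt_pi ?_
    have h1 : Tendsto (fun k : ℕ => (2 : ℝ) * k) atTop atTop :=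
      Tendsto.const_mul_atTop two_pos tendsto_natCast_atTop_atTop
    have h2 : Tendsto (fun x : ℝ => Real.sqrt x) atTop atTop := by
      simp only [Real.sqrt_eq_rpow]
      exact tendsto_rpow_atTop (by norm_num)
    exact h2.comp h1
  refine hstir.congr' ?_
  filter_upwards [eventually_ge_atTop 1] with k hk
  obtain ⟨n, rfl⟩ : ∃ n, k = n + 1 := ⟨k - 1, (Nat.succ_pred_eq_of_pos hk).symm⟩
  set k := n + 1 with hkdef
  have hkpos : (0 : ℝ) < k := by positivity
  have hterm : ∀ m ∈ Finset.range k,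
      (∫ t in Set.Ioi (k : ℝ), t ^ m * Real.exp (-t)) / (Nat.factorial m)
      = Real.exp (-(k : ℝ)) * ∑ j ∈ Finset.range (m + 1), (k : ℝ) ^ j / j.factorial := by
    intro m _
    rw [myGammaInt m k hkpos, mul_div_assoc, Finset.sum_div]
    congr 1
    refine Finset.sum_congr rfl fun j _ => ?_
    have h1 : (j.factorial : ℝ) ≠ 0 := Nat.cast_ne_zero.mpr j.factorial_ne_zero
    have h2 : (m.factorial : ℝ) ≠ 0 := Nat.cast_ne_zero.mpr m.factorial_ne_zero
    field_simp
  rw [Finset.sum_congr rfl hterm, ← Finset.mul_sum,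
    mySumSum (fun j => (k : ℝ) ^ j / j.factorial) k]
  have hcast : (k : ℝ) = (n : ℝ) + 1 := by push_cast [hkdef]; ring
  have heval : ∑ j ∈ Finset.range k, ((k : ℝ) - (j : ℝ)) * ((k : ℝ) ^ j / (j.factorial : ℝ))
      = (k : ℝ) ^ (k : ℕ) / (n.factorial : ℝ) := by
    rw [hcast]; exact mySumEval n
  rw [heval]
  have hfact : ((k : ℕ).factorial : ℝ) = (k : ℝ) * n.factorial := by
    rw [hkdef, Nat.factorial_succ]; push_cast; ring
  have hsq : Real.sqrt (2 * (k : ℕ)) ≠ 0 := by positivity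
  have hfne : (n.factorial : ℝ) ≠ 0 := Nat.cast_ne_zero.mpr n.factorial_ne_zero
  have he1 : Real.exp 1 ^ (k : ℕ) = Real.exp (k : ℕ) := by
    rw [← Real.exp_nat_mul, mul_one]
  have hexp : ((k : ℝ) / Real.exp 1) ^ (k : ℕ) = (k : ℝ) ^ (k : ℕ) * Real.exp (-(k : ℝ)) := by
    rw [div_pow, he1, Real.exp_neg, div_eq_mul_inv]
  have hstir_def : Stirling.stirlingSeq k * Real.sqrt (2 * (k : ℕ))
      = (k : ℕ).factorial / ((k : ℝ) / Real.exp 1) ^ (k : ℕ) := by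
    rw [Stirling.stirlingSeq]
    field_simp
  rw [hstir_def, hexp, hfact]
  have hkne : (k : ℝ) ≠ 0 := ne_of_gt hkpos
  have hene : Real.exp (-(k : ℝ)) ≠ 0 := Real.exp_ne_zero _
  have hpne : (k : ℝ) ^ (k : ℕ) ≠ 0 := pow_ne_zero _ hkne
  field_simp
end

section
/- Let (g_m)_{m∈ℕ} be a strictly decreasing bounded sequence of positive reals. Then the function f(s) = e^{-s} ∑_{m=0}^∞ (g_m/m!) s^m is strictly decreasing on (0,∞), since its derivative equals e^{-s} ∑_{m=0}^∞ ((g_{m+1} - g_m)/m!) s^m < 0 for all s > 0. -/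
open MeasureTheory Real Filter

private lemma summable_aux {C : ℝ} {a : ℕ → ℝ} (h : ∀ n, |a n| ≤ C) (x : ℝ) :
    Summable fun n : ℕ => a n / (Nat.factorial n) * x ^ n := by
  apply Summable.of_abs
  refine Summable.of_nonneg_of_le (fun n => abs_nonneg _) (fun n => ?_)
    ((Real.summable_pow_div_factorial |x|).mul_left C)
  have hfact : (0:ℝ) < Nat.factorial n := by positivity
  rw [abs_mul, abs_div, abs_pow, abs_of_pos hfact]
  calc |a n| / Nat.factorial n * |x| ^ n ≤ C / Nat.factorial n * |x| ^ n := by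
        gcongr; exact h n
    _ = C * (|x| ^ n / Nat.factorial n) := by ring

private lemma hasDerivAt_aux {C : ℝ} {a : ℕ → ℝ} (h : ∀ n, |a n| ≤ C) (s : ℝ) :
    HasDerivAt (fun x : ℝ => ∑' n : ℕ, a n / (Nat.factorial n) * x ^ n)
      (∑' m : ℕ, a (m + 1) / (Nat.factorial m) * s ^ m) s := by
  have hC : 0 ≤ C := (abs_nonneg _).trans (h 0)
  set R : ℝ := |s| + 1 with hR
  have hR1 : (1:ℝ) ≤ R := by rw [hR]; linarith [abs_nonneg s]
  have hR0 : (0:ℝ) < R := lt_of_lt_of_le one_pos hR1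
  set u : ℕ → ℝ := fun n => C * (n * R ^ (n - 1) / Nat.factorial n) with hu
  have husum : Summable u := by
    refine (summable_nat_add_iff 1).mp ?_
    have : (fun n : ℕ => u (n + 1)) = fun n : ℕ => C * (R ^ n / Nat.factorial n) := by
      funext n
      have : ((n:ℝ) + 1) ≠ 0 := by positivity
      simp only [hu, Nat.add_sub_cancel, Nat.factorial_succ, Nat.cast_mul, Nat.cast_add,
        Nat.cast_one]
      field_simp
    rw [this]
    exact (Real.summable_pow_div_factorial R).mul_left C
  have hderiv : ∀ n : ℕ, ∀ y : ℝ,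
      HasDerivAt (fun x : ℝ => a n / (Nat.factorial n) * x ^ n)
        (a n / (Nat.factorial n) * (n * y ^ (n - 1))) y := fun n y =>
    (hasDerivAt_pow n y).const_mul _
  have hbound : ∀ n : ℕ, ∀ y : ℝ, y ∈ Set.Ioo (-R) R →
      ‖a n / (Nat.factorial n) * (n * y ^ (n - 1))‖ ≤ u n := by
    intro n y hy
    have hyR : |y| ≤ R := by
      rw [abs_le]; exact ⟨hy.1.le, hy.2.le⟩
    have hfact : (0:ℝ) < Nat.factorial n := by positivity
    rw [Real.norm_eq_abs, abs_mul, abs_div, abs_mul, abs_pow, abs_of_pos hfact,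
      Nat.abs_cast, hu]
    calc |a n| / Nat.factorial n * (n * |y| ^ (n - 1))
        ≤ C / Nat.factorial n * (n * R ^ (n - 1)) := by
          gcongr; exact h n
      _ = C * (n * R ^ (n - 1) / Nat.factorial n) := by ring
  have hmem : s ∈ Set.Ioo (-R) R := by
    constructor
    · nlinarith [neg_abs_le s, abs_nonneg s]
    · nlinarith [le_abs_self s]
  have h0mem : (0:ℝ) ∈ Set.Ioo (-R) R := ⟨by linarith, hR0⟩
  have key := hasDerivAt_tsum_of_isPreconnected husum isOpen_Ioo
    (convex_Ioo (-R) R).isPreconnected (fun n y _ => hderiv n y) hbound h0mem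
    (summable_aux h 0) hmem
  have hDsum : Summable fun n : ℕ => a n / (Nat.factorial n) * (n * s ^ (n - 1)) :=
    Summable.of_norm_bounded husum fun n => hbound n s hmem
  have hshift : (∑' n : ℕ, a n / (Nat.factorial n) * (n * s ^ (n - 1)))
      = ∑' m : ℕ, a (m + 1) / (Nat.factorial m) * s ^ m := by
    rw [hDsum.tsum_eq_zero_add]
    simp only [Nat.cast_zero, zero_mul, mul_zero, Nat.factorial_zero, zero_add]
    congr 1
    funext n
    have h1 : ((n:ℝ) + 1) ≠ 0 := by positivity
    have h2 : (Nat.factorial n : ℝ) ≠ 0 := by positivity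
    simp only [Nat.add_sub_cancel, Nat.factorial_succ, Nat.cast_mul, Nat.cast_add, Nat.cast_one]
    field_simp
  rw [← hshift]
  exact key

/-- Let `(g_m)` be a strictly decreasing bounded sequence of positive
reals. Then `f(s) = e^{-s} ∑_{m} (g_m/m!) s^m` is strictly decreasing on `(0,∞)`,
since its derivative equals `e^{-s} ∑_{m} ((g_{m+1} - g_m)/m!) s^m < 0` for `s > 0`. -/
theorem strictAnti_poisson_weighted (g : ℕ → ℝ) (hanti : StrictAnti g)
    (hpos : ∀ m : ℕ, 0 < g m) (hbd : ∃ C : ℝ, ∀ m : ℕ, g m ≤ C) :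
    StrictAntiOn (fun s : ℝ => Real.exp (-s) * ∑' m : ℕ, (g m / (Nat.factorial m)) * s ^ m)
        (Set.Ioi 0) ∧
      ∀ s : ℝ, 0 < s →
        HasDerivAt (fun s : ℝ => Real.exp (-s) * ∑' m : ℕ, (g m / (Nat.factorial m)) * s ^ m)
          (Real.exp (-s) * ∑' m : ℕ, ((g (m + 1) - g m) / (Nat.factorial m)) * s ^ m) s ∧
        Real.exp (-s) * ∑' m : ℕ, ((g (m + 1) - g m) / (Nat.factorial m)) * s ^ m < 0 := by
  obtain ⟨C, hC⟩ := hbd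
  have habs : ∀ m : ℕ, |g m| ≤ C := fun m => by
    rw [abs_of_pos (hpos m)]; exact hC m
  have habs' : ∀ m : ℕ, |g (m + 1)| ≤ C := fun m => habs (m + 1)
  -- summability facts
  have hsum1 : ∀ x : ℝ, Summable fun m : ℕ => g m / (Nat.factorial m) * x ^ m :=
    fun x => summable_aux habs x
  have hsum2 : ∀ x : ℝ, Summable fun m : ℕ => g (m + 1) / (Nat.factorial m) * x ^ m :=
    fun x => summable_aux habs' x
  -- the main derivative computation, valid at every point
  have hderiv : ∀ s : ℝ,
      HasDerivAt (fun s : ℝ => Real.exp (-s) * ∑' m : ℕ, (g m / (Nat.factorial m)) * s ^ m)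
        (Real.exp (-s) * ∑' m : ℕ, ((g (m + 1) - g m) / (Nat.factorial m)) * s ^ m) s := by
    intro s
    have hP : HasDerivAt (fun x : ℝ => ∑' m : ℕ, g m / (Nat.factorial m) * x ^ m)
        (∑' m : ℕ, g (m + 1) / (Nat.factorial m) * s ^ m) s := hasDerivAt_aux habs s
    have hE : HasDerivAt (fun x : ℝ => Real.exp (-x)) (-Real.exp (-s)) s := by
      have := (hasDerivAt_neg s).exp
      simpa using this
    have := hE.mul hP
    refine HasDerivAt.congr_deriv this ?_
    have hts : (∑' m : ℕ, ((g (m + 1) - g m) / (Nat.factorial m)) * s ^ m)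
        = (∑' m : ℕ, g (m + 1) / (Nat.factorial m) * s ^ m)
          - ∑' m : ℕ, g m / (Nat.factorial m) * s ^ m := by
      rw [← (hsum2 s).tsum_sub (hsum1 s)]
      congr 1; funext m; rw [sub_div, sub_mul]
    rw [hts]
    ring
  -- negativity of the derivative for s > 0
  have hneg : ∀ s : ℝ, 0 < s →
      Real.exp (-s) * ∑' m : ℕ, ((g (m + 1) - g m) / (Nat.factorial m)) * s ^ m < 0 := by
    intro s hs
    have hsummable : Summable fun m : ℕ => ((g (m + 1) - g m) / (Nat.factorial m)) * s ^ m := by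
      have : (fun m : ℕ => ((g (m + 1) - g m) / (Nat.factorial m)) * s ^ m)
          = fun m : ℕ => g (m + 1) / (Nat.factorial m) * s ^ m
            - g m / (Nat.factorial m) * s ^ m := by
        funext m; rw [sub_div, sub_mul]
      rw [this]
      exact (hsum2 s).sub (hsum1 s)
    have hterm : ∀ m : ℕ, ((g (m + 1) - g m) / (Nat.factorial m)) * s ^ m < 0 := by
      intro m
      apply mul_neg_of_neg_of_pos
      · apply div_neg_of_neg_of_pos
        · linarith [hanti (Nat.lt_succ_self m)]
        · positivity
      · positivity
    have htsum : (∑' m : ℕ, ((g (m + 1) - g m) / (Nat.factorial m)) * s ^ m) < 0 := by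
      have hpos' : 0 < ∑' m : ℕ, -(((g (m + 1) - g m) / (Nat.factorial m)) * s ^ m) :=
        hsummable.neg.tsum_pos (fun m => by linarith [hterm m]) 0 (by linarith [hterm 0])
      rw [tsum_neg] at hpos'
      linarith
    exact mul_neg_of_pos_of_neg (Real.exp_pos _) htsum
  refine ⟨?_, fun s hs => ⟨hderiv s, hneg s hs⟩⟩
  apply strictAntiOn_of_deriv_neg (convex_Ioi 0)
  · exact fun x _ => (hderiv x).continuousAt.continuousWithinAt
  · intro x hx
    rw [interior_Ioi] at hx
    rw [(hderiv x).deriv]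
    exact hneg x hx
end

section
/- Let f : [0,∞) → ℝ be continuous, strictly decreasing, with f(0) > 1 and f(x) → 0 as x → ∞. Then the equation (1/B) ∫_0^B f(x) dx = 1 has exactly one solution B > 0. If instead f(0) ≤ 1, the equation has no positive solution. -/
open MeasureTheory Real Filter

private lemma aux_intInt {f : ℝ → ℝ} (hfc : ContinuousOn f (Set.Ici 0))
    {a b : ℝ} (ha : 0 ≤ a) (hb : 0 ≤ b) : IntervalIntegrable f MeasureTheory.volume a b :=
  (hfc.mono (fun x hx => le_trans (le_min ha hb) hx.1)).intervalIntegrable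

private lemma aux_concave {f : ℝ → ℝ} (hfc : ContinuousOn f (Set.Ici 0))
    (hfa : StrictAntiOn f (Set.Ici 0)) {M : ℝ} (hM : 0 < M) :
    StrictConcaveOn ℝ (Set.Icc 0 M) (fun B => (∫ x in (0:ℝ)..B, f x) - B) := by
  have hderiv : ∀ x ∈ Set.Ioo (0:ℝ) M,
      HasDerivAt (fun B => (∫ x in (0:ℝ)..B, f x) - B) (f x - 1) x := by
    intro x hx
    have h1 : HasDerivAt (fun B => ∫ x in (0:ℝ)..B, f x) (f x) x := by
      apply intervalIntegral.integral_hasDerivAt_right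
        (aux_intInt hfc le_rfl hx.1.le)
      · exact AEStronglyMeasurable.stronglyMeasurableAtFilter_of_mem
          (hfc.aestronglyMeasurable measurableSet_Ici)
          (mem_of_superset (Ioi_mem_nhds hx.1) Set.Ioi_subset_Ici_self)
      · exact hfc.continuousAt (mem_of_superset (Ioi_mem_nhds hx.1) Set.Ioi_subset_Ici_self)
    exact h1.sub (hasDerivAt_id x)
  have hcont : ContinuousOn (fun B => (∫ x in (0:ℝ)..B, f x) - B) (Set.Icc 0 M) := by
    have h1 : ContinuousOn (fun B => ∫ x in (0:ℝ)..B, f x) (Set.uIcc 0 M) :=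
      intervalIntegral.continuousOn_primitive_interval' (aux_intInt hfc le_rfl hM.le)
        Set.left_mem_uIcc
    rw [Set.uIcc_of_le hM.le] at h1
    exact h1.sub continuousOn_id
  apply StrictAntiOn.strictConcaveOn_of_deriv (convex_Icc 0 M) hcont
  rw [interior_Icc]
  intro x hx y hy hxy
  rw [(hderiv x hx).deriv, (hderiv y hy).deriv]
  have := hfa (Set.mem_Ici.2 hx.1.le) (Set.mem_Ici.2 hy.1.le) hxy
  linarith

/-- Let `f : [0,∞) → ℝ` be continuous, strictly decreasing, with
`f(x) → 0` as `x → ∞`. If `f(0) > 1` then `(1/B) ∫_0^B f = 1` has exactly one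
solution `B > 0`; if `f(0) ≤ 1` it has no positive solution. -/
theorem averaging_eq_one_unique_solution (f : ℝ → ℝ)
    (hfc : ContinuousOn f (Set.Ici 0)) (hfa : StrictAntiOn f (Set.Ici 0))
    (hflim : Tendsto f atTop (nhds 0)) :
    (1 < f 0 → ∃! B : ℝ, 0 < B ∧ (1 / B) * ∫ x in (0:ℝ)..B, f x = 1) ∧
      (f 0 ≤ 1 → ¬∃ B : ℝ, 0 < B ∧ (1 / B) * ∫ x in (0:ℝ)..B, f x = 1) := by
  set g : ℝ → ℝ := fun B => (∫ x in (0:ℝ)..B, f x) - B with hg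
  have hg0 : g 0 = 0 := by simp [hg]
  -- key equivalence
  have hiff : ∀ B : ℝ, 0 < B → ((1 / B) * ∫ x in (0:ℝ)..B, f x = 1 ↔ g B = 0) := by
    intro B hB
    rw [hg]
    constructor
    · intro h; field_simp at h; simp [h]
    · intro h
      have : (∫ x in (0:ℝ)..B, f x) = B := by linarith [sub_eq_zero.mp h]
      rw [this]; field_simp
  -- no two positive roots
  have huniq : ∀ B1 B2 : ℝ, 0 < B1 → 0 < B2 → g B1 = 0 → g B2 = 0 → B1 = B2 := by
    have key : ∀ B1 B2 : ℝ, 0 < B1 → B1 < B2 → g B2 = 0 → 0 < g B1 := by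
      intro B1 B2 hB1 h12 h2
      have hcc := aux_concave hfc hfa (hB1.trans h12)
      have hB2 : (0:ℝ) < B2 := hB1.trans h12
      have h := hcc.2 (Set.left_mem_Icc.2 hB2.le) (Set.right_mem_Icc.2 hB2.le)
        hB2.ne
        (show (0:ℝ) < 1 - B1 / B2 by
          have : B1 / B2 < 1 := (div_lt_one hB2).2 h12
          linarith)
        (show (0:ℝ) < B1 / B2 by positivity)
        (show (1 - B1 / B2) + B1 / B2 = 1 by ring)
      have hpt : (1 - B1 / B2) • (0:ℝ) + (B1 / B2) • B2 = B1 := by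
        field_simp
        simp only [smul_zero, smul_eq_mul, mul_zero, zero_add]; exact div_mul_cancel₀ B1 hB2.ne'
      rw [hpt] at h
      have e2 : (∫ x in (0:ℝ)..B2, f x) = B2 := by
        have := h2; simp only [hg] at this; linarith
      simp only [intervalIntegral.integral_same, e2, sub_self, smul_zero, add_zero,
        zero_add] at h
      simp only [hg]
      exact h
    intro B1 B2 hB1 hB2 h1 h2
    rcases lt_trichotomy B1 B2 with h | h | h
    · exact absurd h1 (key B1 B2 hB1 h h2).ne'
    · exact h
    · exact absurd h2 (key B2 B1 hB2 h h1).ne'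
  constructor
  · -- existence
    intro hf0
    -- pick a > 0 with f a > 1
    obtain ⟨a, ha0, hfa1⟩ : ∃ a : ℝ, 0 < a ∧ 1 < f a := by
      have hcw : ContinuousWithinAt f (Set.Ici 0) 0 := hfc 0 Set.self_mem_Ici
      have hev : ∀ᶠ x in nhdsWithin 0 (Set.Ici 0), 1 < f x :=
        hcw.eventually_const_lt hf0
      have hev' : ∀ᶠ x in nhdsWithin 0 (Set.Ioi 0), 1 < f x :=
        hev.filter_mono (nhdsWithin_mono 0 Set.Ioi_subset_Ici_self)
      have : ∀ᶠ x in nhdsWithin 0 (Set.Ioi 0), 0 < x ∧ 1 < f x :=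
        (eventually_mem_nhdsWithin.mono (fun x hx => hx)).and hev'
      obtain ⟨a, ha⟩ := this.exists
      exact ⟨a, ha.1, ha.2⟩
    have hga : 0 < g a := by
      have hle : a * f a ≤ ∫ x in (0:ℝ)..a, f x := by
        have := intervalIntegral.integral_mono_on (μ := volume) ha0.le
          intervalIntegrable_const (aux_intInt hfc le_rfl ha0.le)
          (fun x hx => (hfa.antitoneOn (Set.mem_Ici.2 hx.1)
            (Set.mem_Ici.2 ha0.le) hx.2 : f a ≤ f x))
        simpa using this
      have : a < a * f a := by nlinarith
      simp only [hg]
      linarith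
    -- find c with g c < 0
    obtain ⟨b₀, hb₀⟩ : ∃ b₀ : ℝ, 0 ≤ b₀ ∧ ∀ x, b₀ ≤ x → f x < 1/2 := by
      have := (hflim.eventually (eventually_lt_nhds (by norm_num : (0:ℝ) < 1/2)))
      rw [eventually_atTop] at this
      obtain ⟨b, hb⟩ := this
      exact ⟨max b 0, le_max_right _ _, fun x hx => hb x ((le_max_left _ _).trans hx)⟩
    obtain ⟨hb₀0, hb₀f⟩ := hb₀
    set K : ℝ := ∫ x in (0:ℝ)..b₀, f x with hK
    set c : ℝ := max (max (b₀ + 1) (2*K + 1)) a with hc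
    have hcb : b₀ ≤ c := le_trans (by linarith) ((le_max_left _ _).trans (le_max_left _ _))
    have hca : a ≤ c := le_max_right _ _
    have hcK : 2*K + 1 ≤ c := (le_max_right _ _).trans (le_max_left _ _)
    have hc0 : 0 < c := lt_of_lt_of_le ha0 hca
    have hgc : g c < 0 := by
      have hsplit : (∫ x in (0:ℝ)..c, f x) = K + ∫ x in b₀..c, f x := by
        rw [hK]
        exact (intervalIntegral.integral_add_adjacent_intervals
          (aux_intInt hfc le_rfl hb₀0) (aux_intInt hfc hb₀0 (hb₀0.trans hcb))).symm
      have htail : (∫ x in b₀..c, f x) ≤ (c - b₀) * (1/2) := by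
        have := intervalIntegral.integral_mono_on (μ := volume) hcb
          (aux_intInt hfc hb₀0 (hb₀0.trans hcb)) intervalIntegrable_const
          (fun x hx => (hb₀f x hx.1).le)
        simpa [mul_comm] using this
      simp only [hg]
      rw [hsplit]
      nlinarith
    -- IVT for g on [a, c]
    have hgcont : ContinuousOn g (Set.Icc 0 c) := by
      have h1 : ContinuousOn (fun B => ∫ x in (0:ℝ)..B, f x) (Set.uIcc 0 c) :=
        intervalIntegral.continuousOn_primitive_interval' (aux_intInt hfc le_rfl hc0.le)
          Set.left_mem_uIcc
      rw [Set.uIcc_of_le hc0.le] at h1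
      exact h1.sub continuousOn_id
    have hsub : Set.Icc a c ⊆ Set.Icc 0 c := Set.Icc_subset_Icc ha0.le le_rfl
    have hIVT := intermediate_value_Icc' hca (hgcont.mono hsub)
    have h0mem : (0:ℝ) ∈ Set.Icc (g c) (g a) := ⟨hgc.le, hga.le⟩
    obtain ⟨B, hBmem, hgB⟩ := hIVT h0mem
    have hB0 : 0 < B := lt_of_lt_of_le ha0 hBmem.1
    refine ⟨B, ⟨hB0, (hiff B hB0).2 hgB⟩, ?_⟩
    intro y ⟨hy0, hy⟩
    exact huniq y B hy0 hB0 ((hiff y hy0).1 hy) hgB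
  · -- no solution when f 0 ≤ 1
    intro hf0 ⟨B, hB0, hBeq⟩
    have hgB : g B = 0 := (hiff B hB0).1 hBeq
    have hcc := aux_concave hfc hfa hB0
    have h := hcc.2 (Set.left_mem_Icc.2 hB0.le) (Set.right_mem_Icc.2 hB0.le) hB0.ne
      (show (0:ℝ) < 1/2 by norm_num) (show (0:ℝ) < 1/2 by norm_num)
      (show (1:ℝ)/2 + 1/2 = 1 by norm_num)
    have hmid : ((1:ℝ)/2) • (0:ℝ) + ((1:ℝ)/2) • B = B/2 := by
      rw [smul_zero, smul_eq_mul, zero_add]; ring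
    rw [hmid] at h
    have eB : (∫ x in (0:ℝ)..B, f x) = B := by
      have := hgB; simp only [hg] at this; linarith
    simp only [intervalIntegral.integral_same, eB, sub_self, smul_zero, add_zero,
      zero_add] at h
    -- h : 0 < (∫ 0..B/2) - B/2
    have hub : (∫ x in (0:ℝ)..B/2, f x) ≤ (B/2) * f 0 := by
      have := intervalIntegral.integral_mono_on (μ := volume) (by positivity : (0:ℝ) ≤ B/2)
        (aux_intInt hfc le_rfl (by positivity)) intervalIntegrable_const
        (fun x hx => (hfa.antitoneOn Set.self_mem_Ici (Set.mem_Ici.2 hx.1) hx.1 : f x ≤ f 0))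
      simpa [mul_comm] using this
    have hgB2 : (∫ x in (0:ℝ)..B/2, f x) - B/2 ≤ 0 := by
      nlinarith
    linarith
end

section
/- Let μ > 0, β₀ > 0, g₀ > 0 and let g : [0,∞) → (0,g₀] be continuous, decreasing, with g(0) = g₀ and g(z) → 0 as z → ∞. Suppose R₀ := β₀g₀/μ² > 1. Then the equation β₀ ∫_0^∞ (∫_0^a g((b/μ)e^{-μτ}) dτ) e^{-μa} da = 1 has a unique solution b̄ > 0. -/
open MeasureTheory Real Filter

lemma key_identity (μ g₀ : ℝ) (hμ : 0 < μ) (g : ℝ → ℝ)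
    (hgc : ContinuousOn g (Set.Ici 0))
    (hgpos : ∀ z : ℝ, 0 ≤ z → 0 ≤ g z) (hgle : ∀ z : ℝ, 0 ≤ z → g z ≤ g₀)
    (b : ℝ) (hb : 0 < b) :
    ∫ a in Set.Ioi (0:ℝ),
        (∫ τ in (0:ℝ)..a, g ((b / μ) * Real.exp (-(μ * τ)))) * Real.exp (-(μ * a))
      = (∫ t in (0:ℝ)..(b/μ), g t) / (μ * b) := by
  have hμ' : μ ≠ 0 := ne_of_gt hμ
  have hb' : b ≠ 0 := ne_of_gt hb
  set c : ℝ := b / μ with hc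
  have hcpos : 0 < c := div_pos hb hμ
  set f : ℝ → ℝ := fun τ => c * Real.exp (-(μ * τ)) with hf
  have hfpos : ∀ τ, 0 < f τ := fun τ => mul_pos hcpos (Real.exp_pos _)
  have hfcont : Continuous f := continuous_const.mul ((continuous_const.mul continuous_id).neg.rexp)
  set G : ℝ → ℝ := fun y => ∫ t in (0:ℝ)..y, g t with hG
  have hInt : ∀ x y : ℝ, 0 ≤ x → 0 ≤ y → IntervalIntegrable g volume x y := by
    intro x y hx hy
    refine (hgc.mono ?_).intervalIntegrable
    intro t ht
    rw [Set.mem_uIcc] at ht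
    rcases ht with ⟨h1, _⟩ | ⟨h1, _⟩ <;> [exact le_trans hx h1; exact le_trans hy h1]
  have hGder : ∀ x : ℝ, 0 < x → HasDerivAt G (g x) x := by
    intro x hx
    refine intervalIntegral.integral_hasDerivAt_right (hInt 0 x le_rfl hx.le) ?_ ?_
    · exact (hgc.mono Set.Ioi_subset_Ici_self).stronglyMeasurableAtFilter isOpen_Ioi x hx
    · exact (hgc x hx.le).continuousAt (Ici_mem_nhds hx)
  set φ : ℝ → ℝ := fun τ => g (f τ) with hφdef
  have hφcont : Continuous φ :=
    hgc.comp_continuous hfcont fun τ => (hfpos τ).le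
  set Ψ : ℝ → ℝ := fun a => ∫ τ in (0:ℝ)..a, φ τ with hΨdef
  have hΨder : ∀ a : ℝ, HasDerivAt Ψ (φ a) a := fun a =>
    (hφcont.integral_hasStrictDerivAt 0 a).hasDerivAt
  have hΨcont : Continuous Ψ :=
    intervalIntegral.continuous_primitive (fun a b => hφcont.intervalIntegrable a b) 0
  have hexpder : ∀ a : ℝ, HasDerivAt (fun a => Real.exp (-(μ * a))) (Real.exp (-(μ * a)) * (-μ)) a := by
    intro a
    have h := (Real.hasDerivAt_exp (-(μ * a))).comp a (((hasDerivAt_id a).const_mul μ).neg)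
    simpa [Function.comp_def] using h
  have hfder : ∀ a : ℝ, HasDerivAt f (c * (Real.exp (-(μ * a)) * (-μ))) a := fun a =>
    (hexpder a).const_mul c
  set u : ℝ → ℝ := fun a => (G c - G (f a)) / (μ * b) - Real.exp (-(μ * a)) * Ψ a / μ with hu
  set v : ℝ → ℝ := fun a => Ψ a * Real.exp (-(μ * a)) with hv
  have huder : ∀ a : ℝ, HasDerivAt u (v a) a := by
    intro a
    have h1 : HasDerivAt (fun a => G (f a)) (g (f a) * (c * (Real.exp (-(μ * a)) * (-μ)))) a :=
      (hGder (f a) (hfpos a)).comp a (hfder a)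
    have d1 : HasDerivAt (fun a => (G c - G (f a)) / (μ * b))
        ((0 - g (f a) * (c * (Real.exp (-(μ * a)) * (-μ)))) / (μ * b)) a :=
      ((hasDerivAt_const a (G c)).sub h1).div_const _
    have d2 : HasDerivAt (fun a => Real.exp (-(μ * a)) * Ψ a)
        (Real.exp (-(μ * a)) * (-μ) * Ψ a + Real.exp (-(μ * a)) * φ a) a :=
      (hexpder a).mul (hΨder a)
    have := d1.sub (d2.div_const μ)
    convert this using 1
    show Ψ a * Real.exp (-(μ * a)) = _
    have hφa : φ a = g (f a) := rfl
    rw [hφa]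
    generalize g (f a) = X
    generalize Real.exp (-(μ * a)) = E
    generalize Ψ a = P
    rw [hc]
    field_simp
    ring
    all_goals rfl
  have hvcont : Continuous v := hΨcont.mul ((continuous_const.mul continuous_id).neg.rexp)
  have hkey1 : ∀ T : ℝ, ∫ a in (0:ℝ)..T, v a = u T - u 0 := by
    intro T
    exact intervalIntegral.integral_eq_sub_of_hasDerivAt (fun x _ => huder x)
      (hvcont.intervalIntegrable 0 T)
  have hu0 : u 0 = 0 := by
    have hf0 : f 0 = c := by simp [hf]
    have hΨ0 : Ψ 0 = 0 := by simp [hΨdef]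
    simp [hu, hf0, hΨ0]
  -- limit of u at infinity
  have hexp_lim : Tendsto (fun T : ℝ => Real.exp (-(μ * T))) atTop (nhds 0) := by
    exact Real.tendsto_exp_atBot.comp (tendsto_neg_atBot_iff.mpr (tendsto_id.const_mul_atTop hμ))
  have hflim : Tendsto f atTop (nhds 0) := by
    have := hexp_lim.const_mul c
    simpa using this
  have hGf_lim : Tendsto (fun T => G (f T)) atTop (nhds 0) := by
    have hIccsub : Set.Icc (0:ℝ) c ⊆ Set.Ici 0 := fun t ht => ht.1
    have hGcont : ContinuousOn G (Set.uIcc 0 c) := by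
      apply intervalIntegral.continuousOn_primitive_interval
      rw [Set.uIcc_of_le hcpos.le]
      exact (hgc.mono hIccsub).integrableOn_Icc
    have h0mem : (0:ℝ) ∈ Set.uIcc 0 c := Set.left_mem_uIcc
    have hG0 : G 0 = 0 := intervalIntegral.integral_same
    have htend : Tendsto f atTop (nhdsWithin 0 (Set.uIcc 0 c)) := by
      apply tendsto_nhdsWithin_of_tendsto_nhds_of_eventually_within _ hflim
      filter_upwards [eventually_ge_atTop (0:ℝ)] with T hT
      rw [Set.uIcc_of_le hcpos.le]
      constructor
      · exact (hfpos T).le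
      · calc f T = c * Real.exp (-(μ * T)) := rfl
          _ ≤ c * 1 := by
              apply mul_le_mul_of_nonneg_left _ hcpos.le
              rw [Real.exp_le_one_iff]
              simp [mul_nonneg hμ.le hT]
          _ = c := mul_one c
    have := ((hGcont 0 h0mem).tendsto.comp htend)
    rw [hG0] at this
    exact this
  have hΨbound : ∀ T : ℝ, 0 ≤ T → Ψ T ≤ g₀ * T := by
    intro T hT
    have : Ψ T ≤ ∫ τ in (0:ℝ)..T, g₀ := by
      apply intervalIntegral.integral_mono_on hT (hφcont.intervalIntegrable 0 T)
        (intervalIntegrable_const)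
      intro x _
      exact hgle (f x) (hfpos x).le
    simpa [mul_comm] using this
  have hΨnonneg : ∀ T : ℝ, 0 ≤ T → 0 ≤ Ψ T := by
    intro T hT
    apply intervalIntegral.integral_nonneg hT
    intro x _
    exact hgpos (f x) (hfpos x).le
  have hprod_lim : Tendsto (fun T : ℝ => Real.exp (-(μ * T)) * Ψ T) atTop (nhds 0) := by
    have hmaj : Tendsto (fun T : ℝ => g₀ * T * Real.exp (-(μ * T))) atTop (nhds 0) := by
      have h1 : Tendsto (fun y : ℝ => y ^ 1 * Real.exp (-y)) atTop (nhds 0) :=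
        tendsto_pow_mul_exp_neg_atTop_nhds_zero 1
      have h2 : Tendsto (fun T : ℝ => μ * T) atTop atTop := tendsto_id.const_mul_atTop hμ
      have h3 := (h1.comp h2).const_mul (g₀ / μ)
      rw [mul_zero] at h3
      apply h3.congr
      intro T
      simp only [Function.comp_apply, pow_one]
      field_simp
    apply squeeze_zero' (g := fun T => g₀ * T * Real.exp (-(μ * T))) ?_ ?_ hmaj
    · filter_upwards [eventually_ge_atTop (0:ℝ)] with T hT
      exact mul_nonneg (Real.exp_pos _).le (hΨnonneg T hT)
    · filter_upwards [eventually_ge_atTop (0:ℝ)] with T hT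
      calc Real.exp (-(μ * T)) * Ψ T ≤ Real.exp (-(μ * T)) * (g₀ * T) := by
            exact mul_le_mul_of_nonneg_left (hΨbound T hT) (Real.exp_pos _).le
        _ = g₀ * T * Real.exp (-(μ * T)) := by ring
  have hulim : Tendsto u atTop (nhds (G c / (μ * b))) := by
    have h1 : Tendsto (fun T => (G c - G (f T)) / (μ * b)) atTop (nhds ((G c - 0) / (μ * b))) :=
      ((tendsto_const_nhds.sub hGf_lim)).div_const _
    have h2 : Tendsto (fun T => Real.exp (-(μ * T)) * Ψ T / μ) atTop (nhds (0 / μ)) :=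
      hprod_lim.div_const μ
    have := h1.sub h2
    simpa using this
  have hIlim : Tendsto (fun T : ℝ => ∫ a in (0:ℝ)..T, v a) atTop (nhds (G c / (μ * b))) := by
    have : (fun T : ℝ => ∫ a in (0:ℝ)..T, v a) = fun T => u T - u 0 := funext hkey1
    rw [this, hu0]
    simpa using hulim
  have hvint : IntegrableOn v (Set.Ioi (0:ℝ)) := by
    apply MeasureTheory.integrableOn_Ioi_of_intervalIntegral_norm_tendsto (G c / (μ * b)) 0
      (fun i => (hvcont.integrableOn_Ioc)) tendsto_id
    apply hIlim.congr'
    filter_upwards [eventually_ge_atTop (0:ℝ)] with T hT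
    apply intervalIntegral.integral_congr
    intro x hx
    rw [Set.uIcc_of_le hT] at hx
    have hx0 : 0 ≤ x := hx.1
    have : 0 ≤ v x := mul_nonneg (hΨnonneg x hx0) (Real.exp_pos _).le
    simp [Real.norm_eq_abs, abs_of_nonneg this]
  have hfinal := MeasureTheory.intervalIntegral_tendsto_integral_Ioi 0 hvint tendsto_id
  have := tendsto_nhds_unique hfinal hIlim
  simpa [hv, hΨdef, hφdef, hf, hc, hG] using this


/-- Let `μ, β₀, g₀ > 0` and `g : [0,∞) → (0,g₀]` be continuous,
decreasing, with `g(0) = g₀` and `g(z) → 0` as `z → ∞`. If `R₀ = β₀g₀/μ² > 1`,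
then `β₀ ∫_0^∞ (∫_0^a g((b/μ)e^{-μτ}) dτ) e^{-μa} da = 1` has a unique solution
`b̄ > 0`. -/
theorem deterministic_stationary_birth_rate (μ β₀ g₀ : ℝ) (hμ : 0 < μ) (hβ₀ : 0 < β₀)
    (hg₀ : 0 < g₀) (g : ℝ → ℝ)
    (hgc : ContinuousOn g (Set.Ici 0))
    (hgrange : ∀ z : ℝ, 0 ≤ z → 0 < g z ∧ g z ≤ g₀)
    (hganti : AntitoneOn g (Set.Ici 0))
    (hg0 : g 0 = g₀)
    (hglim : Tendsto g atTop (nhds 0))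
    (hR0 : 1 < β₀ * g₀ / μ ^ 2) :
    ∃! b : ℝ, 0 < b ∧
      β₀ * ∫ a in Set.Ioi (0:ℝ),
        (∫ τ in (0:ℝ)..a, g ((b / μ) * Real.exp (-(μ * τ)))) * Real.exp (-(μ * a)) = 1 := by
  have hμ' : μ ≠ 0 := ne_of_gt hμ
  have hgpos : ∀ z : ℝ, 0 ≤ z → 0 ≤ g z := fun z hz => (hgrange z hz).1.le
  have hgle : ∀ z : ℝ, 0 ≤ z → g z ≤ g₀ := fun z hz => (hgrange z hz).2
  set G : ℝ → ℝ := fun y => ∫ t in (0:ℝ)..y, g t with hGdef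
  set m : ℝ := μ ^ 2 / β₀ with hm
  have hμ2 : 0 < μ ^ 2 := pow_pos hμ 2
  have hmpos : 0 < m := div_pos hμ2 hβ₀
  have hβm : β₀ * m = μ ^ 2 := by rw [hm]; field_simp
  have hmg₀ : m < g₀ := by
    rw [hm, div_lt_iff₀ hβ₀]
    have := (lt_div_iff₀ hμ2).mp hR0
    nlinarith
  have hInt : ∀ x y : ℝ, 0 ≤ x → 0 ≤ y → IntervalIntegrable g volume x y := by
    intro x y hx hy
    refine (hgc.mono ?_).intervalIntegrable
    intro t ht
    rw [Set.mem_uIcc] at ht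
    rcases ht with ⟨h1, _⟩ | ⟨h1, _⟩ <;> [exact le_trans hx h1; exact le_trans hy h1]
  have hGcont : ContinuousOn G (Set.Ici 0) := by
    intro x hx
    have hx' : (0:ℝ) ≤ x := hx
    have h1 : ContinuousOn G (Set.uIcc 0 (x + 1)) := by
      apply intervalIntegral.continuousOn_primitive_interval
      rw [Set.uIcc_of_le (by linarith)]
      exact (hgc.mono fun t ht => ht.1).integrableOn_Icc
    rw [Set.uIcc_of_le (by linarith)] at h1
    have h2 : ContinuousWithinAt G (Set.Icc 0 (x + 1)) x := h1 x ⟨hx', by linarith⟩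
    apply h2.mono_of_mem_nhdsWithin
    rw [← Set.Ici_inter_Iic]
    exact Filter.inter_mem self_mem_nhdsWithin
      (mem_nhdsWithin_of_mem_nhds (Iic_mem_nhds (lt_add_one x)))
  set H : ℝ → ℝ := fun c => β₀ * G c - μ ^ 2 * c with hHdef
  have hHcont : ContinuousOn H (Set.Ici 0) :=
    (continuousOn_const.mul hGcont).sub (continuousOn_const.mul continuousOn_id)
  -- characterization of solutions
  have hsol_iff : ∀ b : ℝ, 0 < b →
      ((β₀ * ∫ a in Set.Ioi (0:ℝ),
        (∫ τ in (0:ℝ)..a, g ((b / μ) * Real.exp (-(μ * τ)))) * Real.exp (-(μ * a)) = 1)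
        ↔ H (b / μ) = 0) := by
    intro b hb
    rw [key_identity μ g₀ hμ g hgc hgpos hgle b hb]
    have hμb : μ * b ≠ 0 := by positivity
    have hpb : μ ^ 2 * (b / μ) = μ * b := by
      field_simp
    constructor
    · intro h
      have h2 : β₀ * G (b / μ) = μ * b := by
        have h' : β₀ * G (b / μ) / (μ * b) = 1 := by
          rw [mul_div_assoc]
          exact h
        rw [div_eq_one_iff_eq hμb] at h'
        exact h'
      show β₀ * G (b / μ) - μ ^ 2 * (b / μ) = 0
      rw [h2, hpb]
      ring
    · intro h
      have hH : β₀ * G (b / μ) - μ ^ 2 * (b / μ) = 0 := h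
      have h2 : β₀ * G (b / μ) = μ * b := by linarith
      show β₀ * (G (b / μ) / (μ * b)) = 1
      rw [← mul_div_assoc, h2, div_self hμb]
  -- small interval where g > m
  have hδ : ∃ δ > 0, ∀ x ∈ Set.Icc (0:ℝ) δ, m < g x := by
    have hcw : ContinuousWithinAt g (Set.Ici 0) 0 := hgc 0 (Set.mem_Ici.mpr le_rfl)
    have hmem : {x | m < g x} ∈ nhdsWithin 0 (Set.Ici 0) := by
      apply hcw
      rw [hg0]
      exact Ioi_mem_nhds hmg₀
    rw [mem_nhdsGE_iff_exists_Icc_subset] at hmem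
    obtain ⟨u, hu, hsub⟩ := hmem
    exact ⟨u, hu, fun x hx => hsub hx⟩
  obtain ⟨δ, hδpos, hδprop⟩ := hδ
  -- strict lower bound on G d for small d
  have hstrict : ∀ d : ℝ, 0 < d → d ≤ δ → m * d < G d := by
    intro d hd hdδ
    have hpos : 0 < ∫ t in (0:ℝ)..d, (g t - m) := by
      apply intervalIntegral.intervalIntegral_pos_of_pos_on
      · exact (hInt 0 d le_rfl hd.le).sub intervalIntegrable_const
      · intro x hx
        have := hδprop x ⟨hx.1.le, hx.2.le.trans hdδ⟩
        linarith
      · exact hd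
    rw [intervalIntegral.integral_sub (hInt 0 d le_rfl hd.le) intervalIntegrable_const] at hpos
    simp only [intervalIntegral.integral_const, smul_eq_mul, sub_zero] at hpos
    have : G d = ∫ t in (0:ℝ)..d, g t := rfl
    nlinarith
  have hHδ : 0 < H δ := by
    have := hstrict δ hδpos le_rfl
    show 0 < β₀ * G δ - μ ^ 2 * δ
    nlinarith
  -- large c where H < 0
  have hM : ∃ M : ℝ, 0 ≤ M ∧ ∀ x : ℝ, M ≤ x → g x ≤ m / 2 := by
    have : {x : ℝ | g x < m / 2} ∈ atTop := hglim (Iio_mem_nhds (half_pos hmpos))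
    rw [mem_atTop_sets] at this
    obtain ⟨M₀, hM₀⟩ := this
    exact ⟨max M₀ 0, le_max_right _ _,
      fun x hx => (hM₀ x (le_trans (le_max_left _ _) hx)).le⟩
  obtain ⟨M, hM0, hMprop⟩ := hM
  set c₂ : ℝ := max δ (max M (2 * β₀ * G M / μ ^ 2)) + 1 with hc₂def
  have hδc₂ : δ < c₂ := lt_of_le_of_lt (le_max_left _ _) (lt_add_one _)
  have hMc₂ : M ≤ c₂ := by
    have h1 : M ≤ M ⊔ (2 * β₀ * G M / μ ^ 2) := le_max_left _ _
    have h2 : M ⊔ (2 * β₀ * G M / μ ^ 2) ≤ δ ⊔ (M ⊔ (2 * β₀ * G M / μ ^ 2)) := le_max_right _ _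
    rw [hc₂def]
    linarith
  have hc₂pos : 0 < c₂ := lt_trans hδpos hδc₂
  have hGMbound : 2 * β₀ * G M / μ ^ 2 + 1 ≤ c₂ := by
    have h1 : 2 * β₀ * G M / μ ^ 2 ≤ M ⊔ (2 * β₀ * G M / μ ^ 2) := le_max_right _ _
    have h2 : M ⊔ (2 * β₀ * G M / μ ^ 2) ≤ δ ⊔ (M ⊔ (2 * β₀ * G M / μ ^ 2)) := le_max_right _ _
    rw [hc₂def]
    linarith
  clear_value c₂
  have htail : ∫ t in M..c₂, g t ≤ (c₂ - M) * (m / 2) := by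
    have h := intervalIntegral.integral_mono_on hMc₂ (hInt M c₂ hM0 hc₂pos.le)
      intervalIntegrable_const (fun x hx => hMprop x hx.1)
    rwa [intervalIntegral.integral_const, smul_eq_mul] at h
  have hsplitc₂ : G M + ∫ t in M..c₂, g t = G c₂ :=
    intervalIntegral.integral_add_adjacent_intervals (hInt 0 M le_rfl hM0) (hInt M c₂ hM0 hc₂pos.le)
  have hHc₂ : H c₂ < 0 := by
    show β₀ * G c₂ - μ ^ 2 * c₂ < 0
    have hG2 : 2 * β₀ * G M ≤ (c₂ - 1) * μ ^ 2 := by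
      rw [div_add' _ _ _ (ne_of_gt hμ2)] at hGMbound
      have := (div_le_iff₀ hμ2).mp hGMbound
      nlinarith
    have h5 : β₀ * ((c₂ - M) * (m / 2)) = (c₂ - M) * μ ^ 2 / 2 := by
      rw [hm]
      field_simp
    have h6 : β₀ * G c₂ = β₀ * G M + β₀ * ∫ t in M..c₂, g t := by
      rw [← hsplitc₂]
      ring
    have h7 : 0 ≤ μ ^ 2 * M := by positivity
    have h8 : β₀ * ∫ t in M..c₂, g t ≤ (c₂ - M) * μ ^ 2 / 2 :=
      le_of_le_of_eq (mul_le_mul_of_nonneg_left htail hβ₀.le) h5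
    linarith [h6, h7, h8, hG2, hμ2]
  -- IVT to get a root
  have hIvt : ∃ ζ ∈ Set.Icc δ c₂, H ζ = 0 := by
    have hsub : Set.Icc δ c₂ ⊆ Set.Ici 0 := fun t ht => le_trans hδpos.le ht.1
    have := intermediate_value_Icc' hδc₂.le (hHcont.mono hsub)
    have h0mem : (0:ℝ) ∈ Set.Icc (H c₂) (H δ) := ⟨hHc₂.le, hHδ.le⟩
    obtain ⟨ζ, hζmem, hζ⟩ := this h0mem
    exact ⟨ζ, hζmem, hζ⟩
  obtain ⟨ζ, hζmem, hζ⟩ := hIvt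
  have hζpos : 0 < ζ := lt_of_lt_of_le hδpos hζmem.1
  -- uniqueness of roots of H
  have huniqH : ∀ c₁ c₃ : ℝ, 0 < c₁ → c₁ < c₃ → H c₁ = 0 → H c₃ = 0 → False := by
    intro c₁ c₃ hc₁ hlt h1 h3
    have hc₃ : 0 < c₃ := lt_trans hc₁ hlt
    have hG1 : G c₁ = m * c₁ := by
      have h1' : β₀ * G c₁ - μ ^ 2 * c₁ = 0 := h1
      have : β₀ * G c₁ = β₀ * (m * c₁) := by rw [← mul_assoc, hβm]; linarith
      exact mul_left_cancel₀ (ne_of_gt hβ₀) this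
    have hG3 : G c₃ = m * c₃ := by
      have h3' : β₀ * G c₃ - μ ^ 2 * c₃ = 0 := h3
      have : β₀ * G c₃ = β₀ * (m * c₃) := by rw [← mul_assoc, hβm]; linarith
      exact mul_left_cancel₀ (ne_of_gt hβ₀) this
    have hsplit : G c₁ + ∫ t in c₁..c₃, g t = G c₃ :=
      intervalIntegral.integral_add_adjacent_intervals (hInt 0 c₁ le_rfl hc₁.le)
        (hInt c₁ c₃ hc₁.le hc₃.le)
    have hmid : ∫ t in c₁..c₃, g t = m * (c₃ - c₁) := by
      rw [hG1, hG3] at hsplit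
      linarith
    have hx0 : ∃ x0 ∈ Set.Icc (0:ℝ) c₁, g x0 < m := by
      by_contra hcon
      push_neg at hcon
      set δ' : ℝ := min δ c₁ with hδ'def
      have hδ'pos : 0 < δ' := lt_min hδpos hc₁
      have hδ'le : δ' ≤ c₁ := min_le_right _ _
      have h1' : m * δ' < G δ' := hstrict δ' hδ'pos (min_le_left _ _)
      have h2' : (c₁ - δ') * m ≤ ∫ t in δ'..c₁, g t := by
        have h := intervalIntegral.integral_mono_on hδ'le intervalIntegrable_const
          (hInt δ' c₁ hδ'pos.le hc₁.le)
          (fun x hx => hcon x ⟨le_trans hδ'pos.le hx.1, hx.2⟩)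
        rwa [intervalIntegral.integral_const, smul_eq_mul] at h
      have hadd : G δ' + ∫ t in δ'..c₁, g t = G c₁ :=
        intervalIntegral.integral_add_adjacent_intervals (hInt 0 δ' le_rfl hδ'pos.le)
          (hInt δ' c₁ hδ'pos.le hc₁.le)
      rw [hG1] at hadd
      linarith
    obtain ⟨x0, hx0mem, hx0lt⟩ := hx0
    have hub : ∫ t in c₁..c₃, g t ≤ (c₃ - c₁) * g x0 := by
      have h := intervalIntegral.integral_mono_on hlt.le (hInt c₁ c₃ hc₁.le hc₃.le)
        intervalIntegrable_const
        (fun x hx => hganti hx0mem.1 (Set.mem_Ici.mpr (le_trans hc₁.le hx.1))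
          (le_trans hx0mem.2 hx.1))
      rwa [intervalIntegral.integral_const, smul_eq_mul] at h
    have h9 : (c₃ - c₁) * g x0 < (c₃ - c₁) * m :=
      mul_lt_mul_of_pos_left hx0lt (sub_pos.mpr hlt)
    linarith [hmid, hub, h9]
  -- assemble
  refine ⟨μ * ζ, ⟨mul_pos hμ hζpos, ?_⟩, ?_⟩
  · rw [hsol_iff (μ * ζ) (mul_pos hμ hζpos)]
    have : μ * ζ / μ = ζ := by field_simp
    rw [this]
    exact hζ
  · rintro b' ⟨hb'pos, hb'eq⟩
    have hroot : H (b' / μ) = 0 := (hsol_iff b' hb'pos).mp hb'eq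
    have hc'pos : 0 < b' / μ := div_pos hb'pos hμ
    rcases lt_trichotomy (b' / μ) ζ with h | h | h
    · exact absurd (huniqH (b' / μ) ζ hc'pos h hroot hζ) not_false
    · field_simp at h
      rw [h]
    · exact absurd (huniqH ζ (b' / μ) hζpos h hζ hroot) not_false
end

section
/- Let μ > 0, λ > 0 and m ≥ 0 an integer. Define l via: for m ≥ 1 and k > m, l_m^k(τ) = (1/(mμ)) ∫_0^τ (1 - e^{-mμ(τ-y)}) f_{Y_{k-m}^k}(y) dy with l_m^m(τ) = (1/(mμ))(1-e^{-mμτ}); and p_k = (λ/μ)^k e^{-λ/μ}/k!. Then ∑_{k=m}^∞ p_k l_m^k(τ) = (1/μ)(1/m!)·(Γ(m, (λ/μ)e^{-μτ}) - Γ(m, λ/μ)) for all τ > 0, where Γ is the upper incomplete gamma function. -/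
open MeasureTheory Real

/-- Density of the `j`-th order statistic of `k` i.i.d. `Exp(μ)` lifetimes (for `y > 0`). -/
noncomputable def fY (μ : ℝ) (j k : ℕ) (y : ℝ) : ℝ :=
  (1 / (Nat.factorial (j - 1))) * ((Nat.factorial k : ℝ) / (Nat.factorial (k - j))) * μ *
    Real.exp (-(((k : ℝ) - (j : ℝ) + 1) * μ * y)) * (1 - Real.exp (-(μ * y))) ^ (j - 1)

/-- Expected time in `[0,τ]` during which exactly `m` of `k` initial individuals
remain alive: `l_m^k(τ) = (1/(mμ)) ∫_0^τ (1 - e^{-mμ(τ-y)}) f_{Y_{k-m}^k}(y) dy` for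
`k > m`, and `l_m^m(τ) = (1/(mμ))(1 - e^{-mμτ})`. -/
noncomputable def lLapse (μ : ℝ) (m k : ℕ) (τ : ℝ) : ℝ :=
  if k = m then (1 / ((m : ℝ) * μ)) * (1 - Real.exp (-((m : ℝ) * μ * τ)))
  else (1 / ((m : ℝ) * μ)) *
    ∫ y in (0:ℝ)..τ, (1 - Real.exp (-((m : ℝ) * μ * (τ - y)))) * fY μ (k - m) k y

/-! ### Auxiliary lemmas -/

lemma integrableOn_pow_exp (n : ℕ) {b : ℝ} (hb : 0 < b) :
    IntegrableOn (fun t : ℝ => t ^ n * Real.exp (-t)) (Set.Ioi b) := by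
  have h := Real.GammaIntegral_convergent (s := (n + 1 : ℝ)) (by positivity)
  have h2 := h.mono_set (Set.Ioi_subset_Ioi hb.le)
  refine (h2.congr_fun (fun x hx => ?_) measurableSet_Ioi)
  have hx0 : (0:ℝ) < x := lt_trans hb hx
  rw [add_sub_cancel_right]
  beta_reduce
  rw [Real.rpow_natCast, mul_comm]

lemma gamma_split (n : ℕ) {b a : ℝ} (hb : 0 < b) (hba : b ≤ a) :
    (∫ t in Set.Ioi b, t ^ n * Real.exp (-t)) - (∫ t in Set.Ioi a, t ^ n * Real.exp (-t))
      = ∫ t in b..a, t ^ n * Real.exp (-t) := by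
  have hI := integrableOn_pow_exp n hb
  have hIu : Set.Ioc b a ∪ Set.Ioi a = Set.Ioi b := Set.Ioc_union_Ioi_eq_Ioi hba
  have := MeasureTheory.setIntegral_union (f := fun t : ℝ => t ^ n * Real.exp (-t))
    (Set.Ioc_disjoint_Ioi le_rfl) measurableSet_Ioi
    (hI.mono_set (by rw [← hIu]; exact Set.subset_union_left))
    (hI.mono_set (by rw [← hIu]; exact Set.subset_union_right))
  rw [hIu] at this
  rw [this, intervalIntegral.integral_of_le hba]
  ring

lemma ibp_pow_exp (m : ℕ) (b a : ℝ) :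
    ∫ z in b..a, z ^ m * Real.exp (-z)
      = b ^ m * Real.exp (-b) - a ^ m * Real.exp (-a)
        + m * ∫ z in b..a, z ^ (m - 1) * Real.exp (-z) := by
  have hv : ∀ z : ℝ, HasDerivAt (fun z : ℝ => -Real.exp (-z)) (Real.exp (-z)) z := by
    intro z
    simpa using ((hasDerivAt_neg z).exp).fun_neg
  have := intervalIntegral.integral_mul_deriv_eq_deriv_mul
    (u := fun z : ℝ => z ^ m) (u' := fun z : ℝ => m * z ^ (m - 1))
    (v := fun z : ℝ => -Real.exp (-z)) (v' := fun z : ℝ => Real.exp (-z))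
    (a := b) (b := a)
    (fun x _ => hasDerivAt_pow m x) (fun x _ => hv x)
    (by apply Continuous.intervalIntegrable; continuity)
    (by apply Continuous.intervalIntegrable; continuity)
  rw [this]
  have : ∫ z in b..a, (m : ℝ) * z ^ (m - 1) * -Real.exp (-z)
      = -(m : ℝ) * ∫ z in b..a, z ^ (m - 1) * Real.exp (-z) := by
    rw [← intervalIntegral.integral_const_mul]
    congr 1; funext z; ring
  rw [this]; ring

lemma integral_exp_neg' (b a : ℝ) :
    ∫ z in b..a, Real.exp (-z) = Real.exp (-b) - Real.exp (-a) := by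
  have hv : ∀ z ∈ Set.uIcc b a, HasDerivAt (fun z : ℝ => -Real.exp (-z)) (Real.exp (-z)) z := by
    intro z _
    simpa using ((hasDerivAt_neg z).exp).fun_neg
  rw [intervalIntegral.integral_eq_sub_of_hasDerivAt hv
    (by apply Continuous.intervalIntegrable; continuity)]
  ring

lemma subst_lemma (μ a b τ : ℝ) (m : ℕ) :
    (∫ y in (0:ℝ)..τ, μ * (a * Real.exp (-(μ * y))) *
        (((a * Real.exp (-(μ * y))) ^ m - b ^ m) * Real.exp (-(a * Real.exp (-(μ * y))))))
      = ∫ z in (a * Real.exp (-(μ * τ)))..a, (z ^ m - b ^ m) * Real.exp (-z) := by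
  have hφ : ∀ y : ℝ, HasDerivAt (fun y : ℝ => a * Real.exp (-(μ * y)))
      (-(μ * (a * Real.exp (-(μ * y))))) y := by
    intro y
    have h1 : HasDerivAt (fun y : ℝ => -(μ * y)) (-μ) y := by
      simpa using ((hasDerivAt_id y).const_mul μ).fun_neg
    have := (h1.exp).const_mul a
    exact this.congr_deriv (by ring)
  have key := intervalIntegral.integral_comp_smul_deriv (a := (0:ℝ)) (b := τ)
    (f := fun y : ℝ => a * Real.exp (-(μ * y)))
    (f' := fun y : ℝ => -(μ * (a * Real.exp (-(μ * y)))))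
    (g := fun z : ℝ => (z ^ m - b ^ m) * Real.exp (-z))
    (fun x _ => hφ x) (by fun_prop) (by fun_prop)
  simp only [Function.comp] at key
  rw [show a * Real.exp (-(μ * 0)) = a by simp] at key
  calc (∫ y in (0:ℝ)..τ, μ * (a * Real.exp (-(μ * y))) *
        (((a * Real.exp (-(μ * y))) ^ m - b ^ m) * Real.exp (-(a * Real.exp (-(μ * y))))))
      = ∫ y in (0:ℝ)..τ, -((-(μ * (a * Real.exp (-(μ * y))))) •
          ((fun z : ℝ => (z ^ m - b ^ m) * Real.exp (-z)) ((fun y : ℝ => a * Real.exp (-(μ * y))) y))) := by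
        apply intervalIntegral.integral_congr
        intro y _
        simp only [smul_eq_mul]
        ring
    _ = -∫ y in (0:ℝ)..τ, (-(μ * (a * Real.exp (-(μ * y))))) •
          ((fun z : ℝ => (z ^ m - b ^ m) * Real.exp (-z)) ((fun y : ℝ => a * Real.exp (-(μ * y))) y)) := by
        rw [intervalIntegral.integral_neg]
    _ = -∫ z in a..(a * Real.exp (-(μ * τ))), (z ^ m - b ^ m) * Real.exp (-z) := by rw [← key]
    _ = ∫ z in (a * Real.exp (-(μ * τ)))..a, (z ^ m - b ^ m) * Real.exp (-z) := by
        rw [intervalIntegral.integral_symm, neg_neg]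

/-- The summand appearing after expanding `p_k · f_{Y_{k-m}^k}`. -/
noncomputable def hAux (μ a τ : ℝ) (m i : ℕ) (y : ℝ) : ℝ :=
  μ * ((1 - Real.exp (-((m : ℝ) * μ * (τ - y)))) *
    (Real.exp (-(((m : ℝ) + 1) * μ * y)) *
      ((a * (1 - Real.exp (-(μ * y)))) ^ i / (Nat.factorial i))))

lemma term_formula (μ a τ : ℝ) (hμ : 0 < μ) (m : ℕ) (hm : 1 ≤ m) (i : ℕ) :
    (a ^ (m + (i + 1)) * Real.exp (-a) / (Nat.factorial (m + (i + 1)))) *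
        lLapse μ m (m + (i + 1)) τ
      = (Real.exp (-a) * a ^ (m + 1) / ((m : ℝ) * μ * Nat.factorial m)) *
        ∫ y in (0:ℝ)..τ, hAux μ a τ m i y := by
  have hne : m + (i + 1) ≠ m := by omega
  have hsub1 : m + (i + 1) - m = i + 1 := by omega
  have hsub2 : m + (i + 1) - (i + 1) = m := by omega
  have hcast : ((m + (i + 1) : ℕ) : ℝ) - ((i + 1 : ℕ) : ℝ) + 1 = (m : ℝ) + 1 := by
    push_cast; ring
  rw [lLapse, if_neg hne, hsub1]
  simp only [fY, hAux, hsub2, Nat.add_sub_cancel, hcast]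
  rw [← mul_assoc, ← intervalIntegral.integral_const_mul, ← intervalIntegral.integral_const_mul]
  apply intervalIntegral.integral_congr
  intro y _
  have h1 : ((Nat.factorial (m + (i + 1)) : ℝ)) ≠ 0 := Nat.cast_ne_zero.mpr (Nat.factorial_ne_zero _)
  have h2 : ((Nat.factorial i : ℝ)) ≠ 0 := Nat.cast_ne_zero.mpr (Nat.factorial_ne_zero _)
  have h3 : ((Nat.factorial m : ℝ)) ≠ 0 := Nat.cast_ne_zero.mpr (Nat.factorial_ne_zero _)
  have h4 : (m : ℝ) ≠ 0 := Nat.cast_ne_zero.mpr (by omega)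
  simp only [mul_pow, pow_add]
  field_simp

lemma pointwise_id (μ a τ y : ℝ) (m : ℕ) (F : ℝ) :
    (Real.exp (-a) * a ^ (m + 1) / ((m : ℝ) * μ * F)) *
      (μ * ((1 - Real.exp (-((m : ℝ) * μ * (τ - y)))) *
        (Real.exp (-(((m : ℝ) + 1) * μ * y)) * Real.exp (a * (1 - Real.exp (-(μ * y)))))))
    = (1 / ((m : ℝ) * μ * F)) * (μ * (a * Real.exp (-(μ * y))) *
        (((a * Real.exp (-(μ * y))) ^ m - (a * Real.exp (-(μ * τ))) ^ m) *
          Real.exp (-(a * Real.exp (-(μ * y)))))) := by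
  have e1 : Real.exp (-a) * Real.exp (a * (1 - Real.exp (-(μ * y))))
      = Real.exp (-(a * Real.exp (-(μ * y)))) := by
    rw [← Real.exp_add]; congr 1; ring
  have e4 : (1 - Real.exp (-((m : ℝ) * μ * (τ - y)))) * Real.exp (-(((m : ℝ) + 1) * μ * y))
      = Real.exp (-(μ * y)) ^ (m + 1) - Real.exp (-(μ * τ)) ^ m * Real.exp (-(μ * y)) := by
    have hu := Real.exp_ne_zero (-(μ * y))
    have e2 : Real.exp (-((m : ℝ) * μ * (τ - y)))
        = Real.exp (-(μ * τ)) ^ m / Real.exp (-(μ * y)) ^ m := by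
      rw [← Real.exp_nat_mul, ← Real.exp_nat_mul, ← Real.exp_sub]; congr 1; ring
    have e3 : Real.exp (-(((m : ℝ) + 1) * μ * y)) = Real.exp (-(μ * y)) ^ (m + 1) := by
      rw [← Real.exp_nat_mul]; congr 1; push_cast; ring
    rw [e2, e3]
    field_simp
    ring
  calc (Real.exp (-a) * a ^ (m + 1) / ((m : ℝ) * μ * F)) *
      (μ * ((1 - Real.exp (-((m : ℝ) * μ * (τ - y)))) *
        (Real.exp (-(((m : ℝ) + 1) * μ * y)) * Real.exp (a * (1 - Real.exp (-(μ * y)))))))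
      = (a ^ (m + 1) / ((m : ℝ) * μ * F)) * μ *
          ((1 - Real.exp (-((m : ℝ) * μ * (τ - y)))) * Real.exp (-(((m : ℝ) + 1) * μ * y))) *
          (Real.exp (-a) * Real.exp (a * (1 - Real.exp (-(μ * y))))) := by ring
    _ = (a ^ (m + 1) / ((m : ℝ) * μ * F)) * μ *
          (Real.exp (-(μ * y)) ^ (m + 1) - Real.exp (-(μ * τ)) ^ m * Real.exp (-(μ * y))) *
          Real.exp (-(a * Real.exp (-(μ * y)))) := by rw [e1, e4]
    _ = (1 / ((m : ℝ) * μ * F)) * (μ * (a * Real.exp (-(μ * y))) *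
        (((a * Real.exp (-(μ * y))) ^ m - (a * Real.exp (-(μ * τ))) ^ m) *
          Real.exp (-(a * Real.exp (-(μ * y)))))) := by
        simp only [mul_pow]
        ring

lemma hAux_continuous (μ a τ : ℝ) (m i : ℕ) : Continuous (hAux μ a τ m i) := by
  unfold hAux; fun_prop

lemma hAux_tsum (μ a τ : ℝ) (m : ℕ) (y : ℝ) :
    ∑' i : ℕ, hAux μ a τ m i y
      = μ * ((1 - Real.exp (-((m : ℝ) * μ * (τ - y)))) *
        (Real.exp (-(((m : ℝ) + 1) * μ * y)) * Real.exp (a * (1 - Real.exp (-(μ * y)))))) := by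
  unfold hAux
  rw [tsum_mul_left, tsum_mul_left, tsum_mul_left]
  congr 2
  rw [Real.exp_eq_exp_ℝ, NormedSpace.exp_eq_tsum_div]

lemma hAux_bound (μ a τ : ℝ) (hμ : 0 < μ) (ha : 0 ≤ a) (m i : ℕ) {y : ℝ}
    (hy : y ∈ Set.Ioc (0:ℝ) τ) :
    ‖hAux μ a τ m i y‖ ≤ μ * (a ^ i / (Nat.factorial i)) := by
  obtain ⟨hy0, hyτ⟩ := hy
  have hmn : (0:ℝ) ≤ (m : ℝ) := Nat.cast_nonneg m
  have k1 : Real.exp (-((m : ℝ) * μ * (τ - y))) ≤ 1 := by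
    refine Real.exp_le_one_iff.mpr (neg_nonpos.mpr ?_)
    exact mul_nonneg (mul_nonneg hmn hμ.le) (by linarith)
  have k1' : (0:ℝ) < Real.exp (-((m : ℝ) * μ * (τ - y))) := Real.exp_pos _
  have k2 : 0 ≤ 1 - Real.exp (-((m : ℝ) * μ * (τ - y))) := by linarith
  have k2' : 1 - Real.exp (-((m : ℝ) * μ * (τ - y))) ≤ 1 := by linarith
  have k3 : Real.exp (-(((m : ℝ) + 1) * μ * y)) ≤ 1 := by
    refine Real.exp_le_one_iff.mpr (neg_nonpos.mpr ?_)
    exact mul_nonneg (mul_nonneg (by linarith) hμ.le) hy0.le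
  have k4a : Real.exp (-(μ * y)) ≤ 1 := by
    refine Real.exp_le_one_iff.mpr (neg_nonpos.mpr ?_)
    exact mul_nonneg hμ.le hy0.le
  have k4b : (0:ℝ) < Real.exp (-(μ * y)) := Real.exp_pos _
  have k5 : 0 ≤ a * (1 - Real.exp (-(μ * y))) := by nlinarith
  have k5' : a * (1 - Real.exp (-(μ * y))) ≤ a := by nlinarith
  have hfi : (0:ℝ) < (Nat.factorial i : ℝ) := by
    exact_mod_cast Nat.factorial_pos i
  have hnn : 0 ≤ hAux μ a τ m i y := by
    unfold hAux
    have := Real.exp_pos (-(((m : ℝ) + 1) * μ * y))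
    positivity
  rw [Real.norm_eq_abs, abs_of_nonneg hnn]
  unfold hAux
  calc μ * ((1 - Real.exp (-((m : ℝ) * μ * (τ - y)))) *
        (Real.exp (-(((m : ℝ) + 1) * μ * y)) *
          ((a * (1 - Real.exp (-(μ * y)))) ^ i / (Nat.factorial i))))
      ≤ μ * (1 * (1 * (a ^ i / (Nat.factorial i)))) := by
        have hp : (a * (1 - Real.exp (-(μ * y)))) ^ i ≤ a ^ i := pow_le_pow_left₀ k5 k5' i
        have he : (0:ℝ) ≤ Real.exp (-(((m : ℝ) + 1) * μ * y)) := (Real.exp_pos _).le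
        have hd : (0:ℝ) ≤ (a * (1 - Real.exp (-(μ * y)))) ^ i / (Nat.factorial i) :=
          div_nonneg (pow_nonneg k5 i) hfi.le
        gcongr
    _ = μ * (a ^ i / (Nat.factorial i)) := by ring

/-- With `p_k = (λ/μ)^k e^{-λ/μ}/k!`,
`∑_{k=m}^∞ p_k l_m^k(τ) = (1/μ)(1/m!)(Γ(m,(λ/μ)e^{-μτ}) - Γ(m,λ/μ))` for `τ > 0`,
where `Γ(m,x) = ∫_x^∞ t^{m-1} e^{-t} dt` is the upper incomplete gamma function. -/
theorem sum_pk_lapse_eq_gamma (μ lam : ℝ) (hμ : 0 < μ) (hlam : 0 < lam)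
    (m : ℕ) (hm : 1 ≤ m) (τ : ℝ) (hτ : 0 < τ) :
    (∑' i : ℕ,
        ((lam / μ) ^ (m + i) * Real.exp (-(lam / μ)) / (Nat.factorial (m + i))) *
          lLapse μ m (m + i) τ) =
      (1 / μ) * (1 / (Nat.factorial m)) *
        ((∫ t in Set.Ioi ((lam / μ) * Real.exp (-(μ * τ))), t ^ (m - 1) * Real.exp (-t)) -
          ∫ t in Set.Ioi (lam / μ), t ^ (m - 1) * Real.exp (-t)) := by
  have hμ0 : μ ≠ 0 := hμ.ne'
  have hm0 : (m : ℝ) ≠ 0 := Nat.cast_ne_zero.mpr (by omega)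
  have hfm : ((Nat.factorial m : ℝ)) ≠ 0 := Nat.cast_ne_zero.mpr (Nat.factorial_ne_zero _)
  set a := lam / μ with ha_def
  have ha : 0 < a := div_pos hlam hμ
  have hb : 0 < a * Real.exp (-(μ * τ)) := by positivity
  have hba : a * Real.exp (-(μ * τ)) ≤ a := by
    nlinarith [Real.exp_le_one_iff.mpr (by nlinarith : -(μ * τ) ≤ 0)]
  set b := a * Real.exp (-(μ * τ)) with hb_def
  set C := Real.exp (-a) * a ^ (m + 1) / ((m : ℝ) * μ * Nat.factorial m) with hC_def
  -- integrability and summability facts for hAux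
  have hIntOn : ∀ i : ℕ, IntegrableOn (hAux μ a τ m i) (Set.Ioc 0 τ) :=
    fun i => (hAux_continuous μ a τ m i).integrableOn_Ioc
  have hsum_norm : Summable (fun i : ℕ => ∫ y in Set.Ioc (0:ℝ) τ, ‖hAux μ a τ m i y‖) := by
    refine Summable.of_nonneg_of_le
      (fun i => integral_nonneg (fun y => norm_nonneg _)) (fun i => ?_)
      (((Real.summable_pow_div_factorial a).mul_left μ).mul_right τ)
    calc ∫ y in Set.Ioc (0:ℝ) τ, ‖hAux μ a τ m i y‖
        ≤ ∫ _y in Set.Ioc (0:ℝ) τ, μ * (a ^ i / (Nat.factorial i)) := by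
          refine setIntegral_mono_on (hIntOn i).norm ?_ measurableSet_Ioc
            (fun y hy => hAux_bound μ a τ hμ ha.le m i hy)
          exact (integrableOn_const_iff).mpr (Or.inr (by simp [Real.volume_Ioc]))
      _ = μ * (a ^ i / (Nat.factorial i)) * τ := by
          rw [setIntegral_const]
          simp [Real.volume_Ioc, ENNReal.toReal_ofReal hτ.le, max_eq_left hτ.le, mul_comm]
  have hswap := MeasureTheory.integral_tsum_of_summable_integral_norm
    (μ := volume.restrict (Set.Ioc (0:ℝ) τ)) (F := hAux μ a τ m)
    (fun i => hIntOn i) hsum_norm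
  -- the tail sum
  have hterm : ∀ i : ℕ,
      (a ^ (m + (i + 1)) * Real.exp (-a) / (Nat.factorial (m + (i + 1)))) *
          lLapse μ m (m + (i + 1)) τ
        = C * ∫ y in Set.Ioc (0:ℝ) τ, hAux μ a τ m i y := by
    intro i
    rw [term_formula μ a τ hμ m hm i, intervalIntegral.integral_of_le hτ.le, hC_def]
  have hsummable : Summable (fun i : ℕ =>
      (a ^ (m + i) * Real.exp (-a) / (Nat.factorial (m + i))) * lLapse μ m (m + i) τ) := by
    have hs1 : Summable (fun i : ℕ => C * ∫ y in Set.Ioc (0:ℝ) τ, hAux μ a τ m i y) :=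
      (Summable.of_norm_bounded hsum_norm
        (fun i => norm_integral_le_integral_norm _)).mul_left C
    have hs2 : Summable (fun i : ℕ =>
        (a ^ (m + (i + 1)) * Real.exp (-a) / (Nat.factorial (m + (i + 1)))) *
          lLapse μ m (m + (i + 1)) τ) :=
      (summable_congr (fun i => hterm i)).mpr hs1
    exact (summable_nat_add_iff 1).mp hs2
  have htail : (∑' i : ℕ,
      (a ^ (m + (i + 1)) * Real.exp (-a) / (Nat.factorial (m + (i + 1)))) *
        lLapse μ m (m + (i + 1)) τ)
      = (1 / ((m : ℝ) * μ * Nat.factorial m)) *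
          ∫ z in b..a, (z ^ m - b ^ m) * Real.exp (-z) := by
    calc (∑' i : ℕ,
        (a ^ (m + (i + 1)) * Real.exp (-a) / (Nat.factorial (m + (i + 1)))) *
          lLapse μ m (m + (i + 1)) τ)
        = ∑' i : ℕ, C * ∫ y in Set.Ioc (0:ℝ) τ, hAux μ a τ m i y := tsum_congr hterm
      _ = C * ∑' i : ℕ, ∫ y in Set.Ioc (0:ℝ) τ, hAux μ a τ m i y := tsum_mul_left
      _ = C * ∫ y in Set.Ioc (0:ℝ) τ, ∑' i : ℕ, hAux μ a τ m i y := by rw [hswap]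
      _ = C * ∫ y in Set.Ioc (0:ℝ) τ,
            μ * ((1 - Real.exp (-((m : ℝ) * μ * (τ - y)))) *
              (Real.exp (-(((m : ℝ) + 1) * μ * y)) *
                Real.exp (a * (1 - Real.exp (-(μ * y)))))) := by
          simp only [hAux_tsum]
      _ = C * ∫ y in (0:ℝ)..τ,
            μ * ((1 - Real.exp (-((m : ℝ) * μ * (τ - y)))) *
              (Real.exp (-(((m : ℝ) + 1) * μ * y)) *
                Real.exp (a * (1 - Real.exp (-(μ * y)))))) := by
          rw [intervalIntegral.integral_of_le hτ.le]
      _ = (1 / ((m : ℝ) * μ * Nat.factorial m)) *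
            ∫ y in (0:ℝ)..τ, μ * (a * Real.exp (-(μ * y))) *
              (((a * Real.exp (-(μ * y))) ^ m - (a * Real.exp (-(μ * τ))) ^ m) *
                Real.exp (-(a * Real.exp (-(μ * y))))) := by
          rw [hC_def, ← intervalIntegral.integral_const_mul, ← intervalIntegral.integral_const_mul]
          exact intervalIntegral.integral_congr fun y _ =>
            pointwise_id μ a τ y m (Nat.factorial m)
      _ = (1 / ((m : ℝ) * μ * Nat.factorial m)) *
            ∫ z in b..a, (z ^ m - b ^ m) * Real.exp (-z) := by
          rw [hb_def, subst_lemma μ a (a * Real.exp (-(μ * τ))) τ m]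
  -- split the sum
  rw [hsummable.tsum_eq_zero_add]
  simp only [Nat.add_zero]
  rw [htail]
  rw [lLapse, if_pos rfl]
  rw [gamma_split (m - 1) hb hba]
  -- compute the interval integral
  have hsplit : ∫ z in b..a, (z ^ m - b ^ m) * Real.exp (-z)
      = (∫ z in b..a, z ^ m * Real.exp (-z)) - b ^ m * (Real.exp (-b) - Real.exp (-a)) := by
    have h1 : ∫ z in b..a, (z ^ m - b ^ m) * Real.exp (-z)
        = (∫ z in b..a, z ^ m * Real.exp (-z)) - ∫ z in b..a, b ^ m * Real.exp (-z) := by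
      rw [← intervalIntegral.integral_sub
        (by apply Continuous.intervalIntegrable; continuity)
        (by apply Continuous.intervalIntegrable; continuity)]
      congr 1; funext z; ring
    rw [h1, intervalIntegral.integral_const_mul, integral_exp_neg']
  rw [hsplit, ibp_pow_exp m b a]
  -- final arithmetic
  have hbm : b ^ m = a ^ m * Real.exp (-((m : ℝ) * μ * τ)) := by
    rw [hb_def, mul_pow, ← Real.exp_nat_mul]
    congr 2
    ring
  rw [hbm]
  field_simp
  ring
end

section
/- Let μ, β₀, g₀ > 0 and g(z) = g₀/(1+z). Then β₀ ∫_0^∞ ∫_{(λ/μ)e^{-μτ}}^{λ/μ} ((1-e^{-t})/t²) dt · (g₀/μ) e^{-μτ} dτ = (β₀ g₀/(μλ)) (γ_E + ln(λ/μ) + Γ(0, λ/μ)) for all λ > 0, where γ_E is the Euler–Mascheroni constant and Γ(0,x) = ∫_x^∞ e^{-s}/s ds. -/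
open MeasureTheory Real Set Filter Topology intervalIntegral



lemma abs_log_le_aux {t : ℝ} (ht : 0 < t) : |Real.log t| ≤ t + 2 * t ^ (-(1/2) : ℝ) := by
  have h2 : (0:ℝ) < t ^ (-(1/2) : ℝ) := Real.rpow_pos_of_pos ht _
  rcases le_or_gt 1 t with h | h
  · rw [abs_of_nonneg (Real.log_nonneg h)]
    have := Real.log_le_sub_one_of_pos ht
    nlinarith
  · rw [abs_of_nonpos (Real.log_nonpos ht.le h.le)]
    have : Real.log (t ^ (-(1/2) : ℝ)) ≤ t ^ (-(1/2) : ℝ) :=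
      (Real.log_le_sub_one_of_pos h2).trans (by linarith)
    rw [Real.log_rpow ht] at this
    nlinarith

lemma integrableOn_exp_mul_log :
    IntegrableOn (fun t => Real.exp (-t) * Real.log t) (Set.Ioi (0:ℝ)) := by
  have h1 : IntegrableOn (fun t : ℝ => Real.exp (-t) * t ^ ((2:ℝ) - 1)) (Set.Ioi 0) :=
    Real.GammaIntegral_convergent (by norm_num)
  have h2 : IntegrableOn (fun t : ℝ => Real.exp (-t) * t ^ ((1/2:ℝ) - 1)) (Set.Ioi 0) :=
    Real.GammaIntegral_convergent (by norm_num)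
  have hbound : IntegrableOn
      (fun t : ℝ => Real.exp (-t) * t ^ ((2:ℝ) - 1) + 2 * (Real.exp (-t) * t ^ ((1/2:ℝ) - 1)))
      (Set.Ioi 0) := h1.add (h2.const_mul 2)
  refine Integrable.mono' hbound ?_ ?_
  · exact (((Real.continuous_exp.comp continuous_neg).measurable.mul
      Real.measurable_log)).aestronglyMeasurable
  · filter_upwards [ae_restrict_mem measurableSet_Ioi] with t ht
    have ht : (0:ℝ) < t := ht
    have he : Real.exp (-t) ≤ 1 := Real.exp_le_one_iff.mpr (by linarith)
    have he' : (0:ℝ) < Real.exp (-t) := Real.exp_pos _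
    have habs := abs_log_le_aux ht
    have hrw : ((1/2:ℝ) - 1) = (-(1/2) : ℝ) := by norm_num
    have hrw2 : t ^ ((2:ℝ) - 1) = t := by
      rw [show ((2:ℝ) - 1) = (1:ℝ) by norm_num, Real.rpow_one]
    rw [norm_mul, Real.norm_eq_abs, Real.norm_eq_abs, abs_of_pos he', hrw, hrw2]
    have h2 : (0:ℝ) < t ^ (-(1/2) : ℝ) := Real.rpow_pos_of_pos ht _
    calc Real.exp (-t) * |Real.log t| ≤ Real.exp (-t) * (t + 2 * t ^ (-(1/2) : ℝ)) := by
          exact mul_le_mul_of_nonneg_left habs he'.le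
      _ = Real.exp (-t) * t + 2 * (Real.exp (-t) * t ^ (-(1/2):ℝ)) := by ring



lemma gamma_integral_eq :
    ∫ t in Set.Ioi (0:ℝ), Real.exp (-t) * Real.log t = -Real.eulerMascheroniConstant := by
  have h1 := Complex.hasDerivAt_GammaIntegral (s := 1) (by norm_num)
  have hd : (∫ t : ℝ in Set.Ioi 0, (t:ℂ) ^ ((1:ℂ) - 1) * (Real.log t * Real.exp (-t)))
      = ((∫ t : ℝ in Set.Ioi 0, Real.exp (-t) * Real.log t : ℝ) : ℂ) := by
    calc ∫ t : ℝ in Set.Ioi 0, (t:ℂ) ^ ((1:ℂ) - 1) * (Real.log t * Real.exp (-t))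
        = ∫ t : ℝ in Set.Ioi 0, ((Real.exp (-t) * Real.log t : ℝ) : ℂ) := by
          refine setIntegral_congr_fun measurableSet_Ioi (fun t _ => ?_)
          simp [Complex.cpow_zero]
          ring
      _ = ((∫ t : ℝ in Set.Ioi 0, Real.exp (-t) * Real.log t : ℝ) : ℂ) := by
          exact _root_.integral_ofReal
  rw [hd] at h1
  have h2 : Complex.Gamma =ᶠ[nhds (1:ℂ)] Complex.GammaIntegral := by
    filter_upwards [(Complex.continuous_re.isOpen_preimage _ isOpen_Ioi).mem_nhds
      (by norm_num : (0:ℝ) < (1:ℂ).re)] with s hs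
    exact Complex.Gamma_eq_integral hs
  have h3 : HasDerivAt Complex.Gamma
      ((∫ t : ℝ in Set.Ioi 0, Real.exp (-t) * Real.log t : ℝ) : ℂ) 1 :=
    h1.congr_of_eventuallyEq h2
  have h4 : HasDerivAt (fun x : ℝ => (Complex.Gamma x).re)
      (((∫ t : ℝ in Set.Ioi 0, Real.exp (-t) * Real.log t : ℝ) : ℂ)).re 1 := by
    exact_mod_cast h3.real_of_complex
  have h5 : (fun x : ℝ => (Complex.Gamma x).re) = Real.Gamma := by
    funext x; rw [Complex.Gamma_ofReal, Complex.ofReal_re]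
  rw [h5, Complex.ofReal_re] at h4
  have := Real.hasDerivAt_Gamma_one.unique h4
  linarith



noncomputable def Lfun (x : ℝ) : ℝ := ∫ t in (0:ℝ)..x, (1 - Real.exp (-t)) / t

lemma one_sub_exp_le (t : ℝ) : 1 - Real.exp (-t) ≤ t := by
  have := Real.add_one_le_exp (-t); linarith

lemma one_sub_exp_nonneg {t : ℝ} (ht : 0 ≤ t) : 0 ≤ 1 - Real.exp (-t) := by
  have : Real.exp (-t) ≤ 1 := Real.exp_le_one_iff.mpr (by linarith)
  linarith

lemma meas_g1 : Measurable (fun t : ℝ => (1 - Real.exp (-t)) / t) :=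
  ((continuous_const.sub (Real.continuous_exp.comp continuous_neg)).measurable).div measurable_id

lemma g1_integrableOn (b : ℝ) :
    IntegrableOn (fun t : ℝ => (1 - Real.exp (-t)) / t) (Set.Ioc 0 b) := by
  refine Integrable.mono' (g := fun _ => (1:ℝ))
    (integrableOn_const measure_Ioc_lt_top.ne)
    meas_g1.aestronglyMeasurable ?_
  filter_upwards [ae_restrict_mem measurableSet_Ioc] with t ht
  have ht0 : (0:ℝ) < t := ht.1
  rw [Real.norm_eq_abs, abs_div, abs_of_nonneg (one_sub_exp_nonneg ht0.le), abs_of_pos ht0]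
  rw [div_le_one ht0]
  exact one_sub_exp_le t

lemma g1_intervalIntegrable {x : ℝ} (hx : 0 ≤ x) :
    IntervalIntegrable (fun t : ℝ => (1 - Real.exp (-t)) / t) volume 0 x := by
  rw [intervalIntegrable_iff_integrableOn_Ioc_of_le hx]
  exact g1_integrableOn x

lemma g1_continuousAt {x : ℝ} (hx : 0 < x) :
    ContinuousAt (fun t : ℝ => (1 - Real.exp (-t)) / t) x :=
  ContinuousAt.div (by fun_prop) continuousAt_id hx.ne'

lemma Lfun_hasDerivAt {x : ℝ} (hx : 0 < x) :
    HasDerivAt Lfun ((1 - Real.exp (-x)) / x) x :=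
  integral_hasDerivAt_right (g1_intervalIntegrable hx.le)
    meas_g1.aestronglyMeasurable.stronglyMeasurableAtFilter (g1_continuousAt hx)

lemma Lfun_abs_le {x : ℝ} (hx : 0 ≤ x) : |Lfun x| ≤ x := by
  have h := intervalIntegral.norm_integral_le_of_norm_le_const (C := 1)
    (f := fun t : ℝ => (1 - Real.exp (-t)) / t) (a := 0) (b := x) ?_
  · simpa [Lfun, abs_of_nonneg hx] using h
  · intro t ht
    rw [Set.uIoc_of_le hx] at ht
    have ht0 : (0:ℝ) < t := ht.1
    rw [Real.norm_eq_abs, abs_div, abs_of_nonneg (one_sub_exp_nonneg ht0.le), abs_of_pos ht0,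
      div_le_one ht0]
    exact one_sub_exp_le t

lemma Lfun_tendsto_zero : Tendsto Lfun (nhdsWithin 0 (Set.Ioi 0)) (nhds 0) := by
  refine squeeze_zero_norm' ?_ (tendsto_id.mono_left nhdsWithin_le_nhds)
  filter_upwards [self_mem_nhdsWithin] with x hx
  rw [Real.norm_eq_abs]
  exact Lfun_abs_le (le_of_lt hx)



lemma exp_div_integrableOn {a : ℝ} (ha : 0 < a) :
    IntegrableOn (fun s : ℝ => Real.exp (-s) / s) (Set.Ioi a) := by
  refine Integrable.mono' (g := fun s => a⁻¹ * Real.exp (-1 * s))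
    ((exp_neg_integrableOn_Ioi a one_pos).const_mul a⁻¹)
    ((Real.continuous_exp.comp continuous_neg).measurable.div measurable_id).aestronglyMeasurable
    ?_
  filter_upwards [ae_restrict_mem measurableSet_Ioi] with s hs
  have hs0 : (0:ℝ) < s := ha.trans hs
  rw [Real.norm_eq_abs, abs_div, abs_of_pos (Real.exp_pos _), abs_of_pos hs0]
  calc Real.exp (-s) / s ≤ Real.exp (-s) / a :=
        div_le_div_of_nonneg_left (Real.exp_pos _).le ha (le_of_lt hs)
    _ = a⁻¹ * Real.exp (-1 * s) := by rw [neg_one_mul]; ring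

lemma exp_log_tendsto_zero :
    Tendsto (fun s : ℝ => Real.exp (-s) * Real.log s) atTop (nhds 0) := by
  refine squeeze_zero_norm' (a := fun s => s ^ 1 * Real.exp (-s)) ?_ ?_
  · filter_upwards [eventually_ge_atTop (1:ℝ)] with s hs
    have hs0 : (0:ℝ) < s := lt_of_lt_of_le one_pos hs
    have hlog : Real.log s ≤ s := (Real.log_le_sub_one_of_pos hs0).trans (by linarith)
    rw [Real.norm_eq_abs, abs_mul, abs_of_pos (Real.exp_pos _),
      abs_of_nonneg (Real.log_nonneg hs)]
    calc Real.exp (-s) * Real.log s ≤ Real.exp (-s) * s :=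
          mul_le_mul_of_nonneg_left hlog (Real.exp_pos _).le
      _ = s ^ 1 * Real.exp (-s) := by ring
  · simpa using Real.tendsto_pow_mul_exp_neg_atTop_nhds_zero 1

lemma hasDerivAt_exp_neg (x : ℝ) : HasDerivAt (fun s : ℝ => Real.exp (-s)) (-Real.exp (-x)) x := by
  have h := (Real.hasDerivAt_exp (-x)).comp x (hasDerivAt_neg x)
  simp only [mul_neg, mul_one] at h
  exact h

lemma B1 {a : ℝ} (ha : 0 < a) :
    ∫ s in Set.Ioi a, Real.exp (-s) * Real.log s
      = Real.exp (-a) * Real.log a + ∫ s in Set.Ioi a, Real.exp (-s) / s := by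
  have hder : ∀ x ∈ Set.Ici a, HasDerivAt (fun s => -(Real.exp (-s) * Real.log s))
      ((fun s => Real.exp (-s) * Real.log s - Real.exp (-s) / s) x) x := by
    intro x hx
    have hx0 : 0 < x := lt_of_lt_of_le ha hx
    have h2 := ((hasDerivAt_exp_neg x).mul (Real.hasDerivAt_log hx0.ne')).neg
    refine h2.congr_deriv ?_
    field_simp
    ring
  have hint : IntegrableOn (fun x => Real.exp (-x) * Real.log x - Real.exp (-x) / x)
      (Set.Ioi a) :=
    (integrableOn_exp_mul_log.mono_set (Set.Ioi_subset_Ioi ha.le)).sub (exp_div_integrableOn ha)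
  have htt : Tendsto (fun s => -(Real.exp (-s) * Real.log s)) atTop (nhds 0) := by
    simpa using exp_log_tendsto_zero.neg
  have key := integral_Ioi_of_hasDerivAt_of_tendsto' hder hint htt
  rw [integral_sub (integrableOn_exp_mul_log.mono_set (Set.Ioi_subset_Ioi ha.le))
    (exp_div_integrableOn ha)] at key
  have : (0:ℝ) - -(Real.exp (-a) * Real.log a) = Real.exp (-a) * Real.log a := by ring
  rw [this] at key
  linarith

lemma B2 {a : ℝ} (ha : 0 < a) :
    ∫ s in Set.Ioc 0 a, Real.exp (-s) * Real.log s
      = (1 - Real.exp (-a)) * Real.log a - Lfun a := by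
  have hder : ∀ x ∈ Set.Ioo 0 a, HasDerivAt
      (fun s => (1 - Real.exp (-s)) * Real.log s - Lfun s)
      ((fun s => Real.exp (-s) * Real.log s) x) x := by
    intro x hx
    have hx0 : 0 < x := hx.1
    have h1 : HasDerivAt (fun s : ℝ => 1 - Real.exp (-s)) (Real.exp (-x)) x := by
      simpa using (hasDerivAt_exp_neg x).const_sub 1
    have h2 := (h1.mul (Real.hasDerivAt_log hx0.ne')).sub (Lfun_hasDerivAt hx0)
    refine h2.congr_deriv ?_
    field_simp
    ring
  have hint : IntervalIntegrable (fun s => Real.exp (-s) * Real.log s) volume 0 a := by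
    rw [intervalIntegrable_iff_integrableOn_Ioc_of_le ha.le]
    exact integrableOn_exp_mul_log.mono_set Set.Ioc_subset_Ioi_self
  have ht0 : Tendsto (fun s => (1 - Real.exp (-s)) * Real.log s - Lfun s)
      (nhdsWithin 0 (Set.Ioi 0)) (nhds 0) := by
    have hA : Tendsto (fun s : ℝ => (1 - Real.exp (-s)) * Real.log s)
        (nhdsWithin 0 (Set.Ioi 0)) (nhds 0) := by
      refine squeeze_zero_norm' (a := fun s => ‖Real.log s * s ^ (1:ℝ)‖) ?_ ?_
      · filter_upwards [self_mem_nhdsWithin] with s hs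
        have hs0 : (0:ℝ) < s := hs
        rw [Real.norm_eq_abs, abs_mul, abs_of_nonneg (one_sub_exp_nonneg hs0.le)]
        calc (1 - Real.exp (-s)) * |Real.log s| ≤ s * |Real.log s| :=
              mul_le_mul_of_nonneg_right (one_sub_exp_le s) (abs_nonneg _)
          _ = ‖Real.log s * s ^ (1:ℝ)‖ := by
              rw [Real.norm_eq_abs, abs_mul, Real.rpow_one, abs_of_pos hs0]; ring
      · have := (tendsto_log_mul_rpow_nhdsGT_zero one_pos).norm
        simpa using this
    have := hA.sub Lfun_tendsto_zero
    simpa using this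
  have hta : Tendsto (fun s => (1 - Real.exp (-s)) * Real.log s - Lfun s)
      (nhdsWithin a (Set.Iio a)) (nhds ((1 - Real.exp (-a)) * Real.log a - Lfun a)) := by
    have h1 : HasDerivAt (fun s : ℝ => 1 - Real.exp (-s)) (Real.exp (-a)) a := by
      simpa using (hasDerivAt_exp_neg a).const_sub 1
    have hc : ContinuousAt (fun s => (1 - Real.exp (-s)) * Real.log s - Lfun s) a :=
      ((h1.mul (Real.hasDerivAt_log ha.ne')).sub (Lfun_hasDerivAt ha)).continuousAt
    exact hc.tendsto.mono_left nhdsWithin_le_nhds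
  have key := intervalIntegral.integral_eq_sub_of_hasDerivAt_of_tendsto ha hder hint ht0 hta
  rw [intervalIntegral.integral_of_le ha.le] at key
  rw [key]
  ring

lemma Lfun_eq {a : ℝ} (ha : 0 < a) :
    Lfun a = Real.eulerMascheroniConstant + Real.log a + ∫ s in Set.Ioi a, Real.exp (-s) / s := by
  have hsplit : ∫ s in Set.Ioi (0:ℝ), Real.exp (-s) * Real.log s
      = (∫ s in Set.Ioc 0 a, Real.exp (-s) * Real.log s)
        + ∫ s in Set.Ioi a, Real.exp (-s) * Real.log s := by
    rw [← setIntegral_union (Set.Ioc_disjoint_Ioi le_rfl) measurableSet_Ioi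
      (integrableOn_exp_mul_log.mono_set Set.Ioc_subset_Ioi_self)
      (integrableOn_exp_mul_log.mono_set (Set.Ioi_subset_Ioi ha.le)),
      Set.Ioc_union_Ioi_eq_Ioi ha.le]
  rw [gamma_integral_eq, B2 ha, B1 ha] at hsplit
  have hlog : (1 - Real.exp (-a)) * Real.log a + Real.exp (-a) * Real.log a = Real.log a := by
    ring
  linarith



lemma g2_contOn {s : Set ℝ} (hs : s ⊆ Set.Ioi 0) :
    ContinuousOn (fun t : ℝ => (1 - Real.exp (-t)) / t ^ 2) s := by
  refine ContinuousOn.div (by fun_prop) (by fun_prop) ?_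
  intro t ht
  exact pow_ne_zero _ (ne_of_gt (hs ht))

lemma g2_intervalIntegrable {x a : ℝ} (hx : 0 < x) (ha : 0 < a) :
    IntervalIntegrable (fun t : ℝ => (1 - Real.exp (-t)) / t ^ 2) volume x a := by
  refine (g2_contOn ?_).intervalIntegrable
  intro t ht
  exact lt_of_lt_of_le (lt_min hx ha) ht.1

lemma K_hasDerivAt {x a : ℝ} (hx : 0 < x) (ha : 0 < a) :
    HasDerivAt (fun u => ∫ t in u..a, (1 - Real.exp (-t)) / t ^ 2)
      (-((1 - Real.exp (-x)) / x ^ 2)) x := by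
  refine integral_hasDerivAt_left (g2_intervalIntegrable hx ha) ?_ ?_
  · exact (ContinuousOn.stronglyMeasurableAtFilter isOpen_Ioi (g2_contOn le_rfl)) x hx
  · exact (g2_contOn le_rfl).continuousAt (Ioi_mem_nhds hx)

lemma K_nonneg {x a : ℝ} (hx : 0 < x) (hxa : x ≤ a) :
    0 ≤ ∫ t in x..a, (1 - Real.exp (-t)) / t ^ 2 := by
  refine intervalIntegral.integral_nonneg hxa (fun t ht => ?_)
  have ht0 : 0 < t := lt_of_lt_of_le hx ht.1
  exact div_nonneg (one_sub_exp_nonneg ht0.le) (by positivity)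

lemma K_le {x a : ℝ} (hx : 0 < x) (hxa : x ≤ a) :
    (∫ t in x..a, (1 - Real.exp (-t)) / t ^ 2) ≤ Real.log a - Real.log x := by
  have ha : 0 < a := lt_of_lt_of_le hx hxa
  have h1 : (∫ t in x..a, (1 - Real.exp (-t)) / t ^ 2) ≤ ∫ t in x..a, 1 / t := by
    refine intervalIntegral.integral_mono_on hxa (g2_intervalIntegrable hx ha) ?_ ?_
    · refine ContinuousOn.intervalIntegrable (ContinuousOn.div continuousOn_const
        continuousOn_id ?_)
      intro t ht
      have : (0:ℝ) < t := lt_of_lt_of_le (lt_min hx ha) ht.1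
      exact this.ne'
    · intro t ht
      have ht0 : 0 < t := lt_of_lt_of_le hx ht.1
      rw [div_le_div_iff₀ (by positivity) ht0]
      have := one_sub_exp_le t
      nlinarith
  have h2 : (∫ t in x..a, 1 / t) = Real.log a - Real.log x := by
    rw [integral_one_div (Set.notMem_uIcc_of_lt hx ha), Real.log_div ha.ne' hx.ne']
  linarith [h1, h2.le]

lemma outer_integral {μ g₀ a : ℝ} (hμ : 0 < μ) (hg₀ : 0 < g₀) (ha : 0 < a) :
    ∫ τ in Set.Ioi (0:ℝ),
        (∫ t in (a * Real.exp (-(μ * τ)))..a, (1 - Real.exp (-t)) / t ^ 2)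
          * (g₀ / μ) * Real.exp (-(μ * τ))
      = g₀ / (μ ^ 2 * a) * Lfun a := by
  set c : ℝ := g₀ / (μ ^ 2 * a) with hc
  have hc0 : 0 < c := by positivity
  set Φ : ℝ → ℝ := fun τ =>
    -(c * ((a * Real.exp (-(μ * τ)))
        * (∫ t in (a * Real.exp (-(μ * τ)))..a, (1 - Real.exp (-t)) / t ^ 2)
      + Lfun (a * Real.exp (-(μ * τ))))) with hΦ
  have hu : ∀ τ : ℝ, HasDerivAt (fun τ => a * Real.exp (-(μ * τ)))
      (a * (Real.exp (-(μ * τ)) * -μ)) τ := by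
    intro τ
    have hinner : HasDerivAt (fun τ : ℝ => -(μ * τ)) (-μ) τ := by
      have h := ((hasDerivAt_id τ).const_mul μ).neg
      rw [mul_one] at h
      exact h
    exact ((Real.hasDerivAt_exp (-(μ * τ))).comp τ hinner).const_mul a
  have hu0 : ∀ τ : ℝ, 0 < a * Real.exp (-(μ * τ)) :=
    fun τ => mul_pos ha (Real.exp_pos _)
  have hderiv : ∀ τ ∈ Set.Ici (0:ℝ), HasDerivAt Φ
      ((∫ t in (a * Real.exp (-(μ * τ)))..a, (1 - Real.exp (-t)) / t ^ 2)
        * (g₀ / μ) * Real.exp (-(μ * τ))) τ := by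
    intro τ _
    have hKc := (K_hasDerivAt (hu0 τ) ha).comp τ (hu τ)
    have hLc := (Lfun_hasDerivAt (hu0 τ)).comp τ (hu τ)
    have h := (((hu τ).mul hKc).add hLc).const_mul c |>.neg
    refine h.congr_deriv ?_
    simp only [Function.comp_apply]
    have hE : Real.exp (-(μ * τ)) ≠ 0 := (Real.exp_pos _).ne'
    rw [hc]
    field_simp
    ring
  have hint : IntegrableOn (fun τ =>
      (∫ t in (a * Real.exp (-(μ * τ)))..a, (1 - Real.exp (-t)) / t ^ 2)
        * (g₀ / μ) * Real.exp (-(μ * τ))) (Set.Ioi 0) := by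
    refine Integrable.mono' (g := fun τ => (2 * g₀ / μ) * Real.exp (-(μ / 2) * τ))
      ((exp_neg_integrableOn_Ioi 0 (by positivity)).const_mul _) ?_ ?_
    · refine (ContinuousOn.mul (ContinuousOn.mul ?_ continuousOn_const) (by fun_prop)).aestronglyMeasurable
        measurableSet_Ioi
      intro τ _
      refine ContinuousAt.continuousWithinAt ?_
      exact ContinuousAt.comp (x := τ)
        (g := fun u => ∫ t in u..a, (1 - Real.exp (-t)) / t ^ 2)
        (f := fun τ : ℝ => a * Real.exp (-(μ * τ)))
        (K_hasDerivAt (hu0 τ) ha).continuousAt (by fun_prop)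
    · filter_upwards [ae_restrict_mem measurableSet_Ioi] with τ hτ
      have hτ0 : (0:ℝ) < τ := hτ
      have hE1 : Real.exp (-(μ * τ)) ≤ 1 := Real.exp_le_one_iff.mpr (by nlinarith)
      have hua : a * Real.exp (-(μ * τ)) ≤ a := by nlinarith [Real.exp_pos (-(μ * τ))]
      have hKn := K_nonneg (hu0 τ) hua
      have hKl := K_le (hu0 τ) hua
      have hlogu : Real.log (a * Real.exp (-(μ * τ))) = Real.log a - μ * τ := by
        rw [Real.log_mul ha.ne' (Real.exp_pos _).ne', Real.log_exp]; ring
      have hKl' : (∫ t in (a * Real.exp (-(μ * τ)))..a, (1 - Real.exp (-t)) / t ^ 2) ≤ μ * τ := by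
        rw [hlogu] at hKl; linarith
      have hEpos := Real.exp_pos (-(μ * τ))
      rw [Real.norm_eq_abs, abs_of_nonneg (by positivity)]
      have step1 : (∫ t in (a * Real.exp (-(μ * τ)))..a, (1 - Real.exp (-t)) / t ^ 2)
          * (g₀ / μ) * Real.exp (-(μ * τ)) ≤ (μ * τ) * (g₀ / μ) * Real.exp (-(μ * τ)) := by
        have : (0:ℝ) ≤ (g₀ / μ) * Real.exp (-(μ * τ)) := by positivity
        nlinarith
      have hx : (μ / 2) * τ ≤ Real.exp ((μ / 2) * τ) := by
        have := Real.add_one_le_exp ((μ / 2) * τ); linarith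
      have hEsplit : Real.exp (-(μ * τ)) = Real.exp (-(μ / 2) * τ) * Real.exp (-(μ / 2) * τ) := by
        rw [← Real.exp_add]; ring_nf
      have hτe : τ * Real.exp (-(μ / 2) * τ) ≤ 2 / μ := by
        rw [show (-(μ / 2) * τ) = -((μ / 2) * τ) by ring, Real.exp_neg, ← div_eq_mul_inv,
          div_le_div_iff₀ (Real.exp_pos _) hμ]
        linarith
      have step2 : (μ * τ) * (g₀ / μ) * Real.exp (-(μ * τ))
          ≤ (2 * g₀ / μ) * Real.exp (-(μ / 2) * τ) := by
        rw [hEsplit]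
        have hEp2 := Real.exp_pos (-(μ / 2) * τ)
        have h1 : (μ * τ) * (g₀ / μ) = g₀ * τ := by field_simp
        rw [h1]
        calc g₀ * τ * (Real.exp (-(μ / 2) * τ) * Real.exp (-(μ / 2) * τ))
            = g₀ * (τ * Real.exp (-(μ / 2) * τ)) * Real.exp (-(μ / 2) * τ) := by ring
          _ ≤ g₀ * (2 / μ) * Real.exp (-(μ / 2) * τ) := by
              have : g₀ * (τ * Real.exp (-(μ / 2) * τ)) ≤ g₀ * (2 / μ) :=
                mul_le_mul_of_nonneg_left hτe hg₀.le
              exact mul_le_mul_of_nonneg_right this hEp2.le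
          _ = (2 * g₀ / μ) * Real.exp (-(μ / 2) * τ) := by ring
      linarith
  have htend : Tendsto Φ atTop (nhds 0) := by
    refine squeeze_zero_norm'
      (a := fun τ => c * a * (μ * τ * Real.exp (-(μ * τ))) + c * a * Real.exp (-(μ * τ))) ?_ ?_
    · filter_upwards [eventually_ge_atTop (0:ℝ)] with τ hτ0
      have hE1 : Real.exp (-(μ * τ)) ≤ 1 := Real.exp_le_one_iff.mpr (by nlinarith)
      have hua : a * Real.exp (-(μ * τ)) ≤ a := by nlinarith [Real.exp_pos (-(μ * τ))]
      have hKn := K_nonneg (hu0 τ) hua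
      have hKl := K_le (hu0 τ) hua
      have hlogu : Real.log (a * Real.exp (-(μ * τ))) = Real.log a - μ * τ := by
        rw [Real.log_mul ha.ne' (Real.exp_pos _).ne', Real.log_exp]; ring
      have hKl' : (∫ t in (a * Real.exp (-(μ * τ)))..a, (1 - Real.exp (-t)) / t ^ 2) ≤ μ * τ := by
        rw [hlogu] at hKl; linarith
      have hLle := Lfun_abs_le (hu0 τ).le
      have hEpos := Real.exp_pos (-(μ * τ))
      rw [hΦ, Real.norm_eq_abs, abs_neg, abs_mul, abs_of_pos hc0]
      have habs : |a * Real.exp (-(μ * τ))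
            * (∫ t in (a * Real.exp (-(μ * τ)))..a, (1 - Real.exp (-t)) / t ^ 2)
          + Lfun (a * Real.exp (-(μ * τ)))|
          ≤ a * Real.exp (-(μ * τ)) * (μ * τ) + a * Real.exp (-(μ * τ)) := by
        refine (abs_add_le _ _).trans ?_
        have h1 : |a * Real.exp (-(μ * τ))
            * (∫ t in (a * Real.exp (-(μ * τ)))..a, (1 - Real.exp (-t)) / t ^ 2)|
            ≤ a * Real.exp (-(μ * τ)) * (μ * τ) := by
          rw [abs_of_nonneg (by positivity)]
          exact mul_le_mul_of_nonneg_left hKl' (by positivity)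
        linarith
      calc c * |a * Real.exp (-(μ * τ))
            * (∫ t in (a * Real.exp (-(μ * τ)))..a, (1 - Real.exp (-t)) / t ^ 2)
          + Lfun (a * Real.exp (-(μ * τ)))|
          ≤ c * (a * Real.exp (-(μ * τ)) * (μ * τ) + a * Real.exp (-(μ * τ))) :=
            mul_le_mul_of_nonneg_left habs hc0.le
        _ = c * a * (μ * τ * Real.exp (-(μ * τ))) + c * a * Real.exp (-(μ * τ)) := by ring
    · have hμτ : Tendsto (fun τ : ℝ => μ * τ) atTop atTop :=
        tendsto_id.const_mul_atTop hμ
      have hbase : Tendsto (fun x : ℝ => x * Real.exp (-x)) atTop (nhds 0) := by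
        simpa using Real.tendsto_pow_mul_exp_neg_atTop_nhds_zero 1
      have h1 : Tendsto (fun τ : ℝ => μ * τ * Real.exp (-(μ * τ))) atTop (nhds 0) :=
        hbase.comp hμτ
      have h2 : Tendsto (fun τ : ℝ => Real.exp (-(μ * τ))) atTop (nhds 0) :=
        Real.tendsto_exp_neg_atTop_nhds_zero.comp hμτ
      have := ((h1.const_mul (c * a)).add (h2.const_mul (c * a)))
      simpa using this
  have key := integral_Ioi_of_hasDerivAt_of_tendsto' hderiv hint htend
  rw [key, hΦ]
  simp only [mul_zero, neg_zero, Real.exp_zero, mul_one, intervalIntegral.integral_same]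
  ring



/-- For `μ, β₀, g₀, λ > 0`,
`β₀ ∫_0^∞ (∫_{(λ/μ)e^{-μτ}}^{λ/μ} (1-e^{-t})/t² dt) (g₀/μ) e^{-μτ} dτ
  = (β₀g₀/(μλ)) (γ_E + ln(λ/μ) + Γ(0,λ/μ))`,
where `γ_E` is the Euler–Mascheroni constant and `Γ(0,x) = ∫_x^∞ e^{-s}/s ds`. -/
theorem explicit_R_formula (μ β₀ g₀ lam : ℝ)
    (hμ : 0 < μ) (hβ₀ : 0 < β₀) (hg₀ : 0 < g₀) (hlam : 0 < lam) :
    β₀ * ∫ τ in Set.Ioi (0:ℝ),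
        (∫ t in ((lam / μ) * Real.exp (-(μ * τ)))..(lam / μ),
          (1 - Real.exp (-t)) / t ^ 2) * (g₀ / μ) * Real.exp (-(μ * τ)) =
      (β₀ * g₀ / (μ * lam)) *
        (Real.eulerMascheroniConstant + Real.log (lam / μ) +
          ∫ s in Set.Ioi (lam / μ), Real.exp (-s) / s) := by
  have ha : 0 < lam / μ := div_pos hlam hμ
  rw [outer_integral hμ hg₀ ha, Lfun_eq ha,
    show g₀ / (μ ^ 2 * (lam / μ)) = g₀ / (μ * lam) by rw [show μ ^ 2 * (lam / μ) = μ * lam by field_simp]]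
  ring
end
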